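/- arXiv:1301.1999 — 6 statements merged into one kernel-verified Lean document; each statement's English description precedes it below -/
import Mathlib

section
/- There exists an absolute constant c > 0 such that the following holds. For every finite simple undirected unweighted graph G = (V, E) on n vertices and every subset S ⊆ V, there exists a spanning subgraph H of G with at most c · n · √|S| edges such that for every pair of vertices u, v ∈ S lying in the same connected component of G, the distance in H satisfies δ_H(u, v) ≤ δ_G(u, v) + 2. -/
set_option linter.unusedSectionVars false
set_option maxHeartbeats 1000000

open SimpleGraph

variable {V : Type} {G : SimpleGraph V}

/-- prefix walk -/
lemma exists_prefix_walk (w : G.Walk u v) (i : ℕ) :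
    ∃ p : G.Walk u (w.getVert i), p.length = min i w.length ∧ ∀ e ∈ p.edges, e ∈ w.edges := by
  induction w generalizing i with
  | nil => exact ⟨.nil, by simp [Walk.getVert], by simp⟩
  | cons h q ih =>
    cases i with
    | zero => exact ⟨.nil, by simp; rfl, by intro e he; cases he⟩
    | succ i =>
      obtain ⟨p, hl, he⟩ := ih i
      refine ⟨.cons h p, by change p.length + 1 = _; simp only [Walk.length_cons, hl]; omega, by
        intro e hee
        rcases List.mem_cons.1 (by simpa [Walk.edges_cons] using hee) with h1 | h2
        · simp [Walk.edges_cons, h1]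
        · exact List.mem_cons_of_mem _ (he _ h2)⟩

lemma exists_suffix_walk (w : G.Walk u v) (i : ℕ) :
    ∃ p : G.Walk (w.getVert i) v, p.length = w.length - i ∧ ∀ e ∈ p.edges, e ∈ w.edges := by
  induction w generalizing i with
  | nil => exact ⟨.nil, by simp [Walk.getVert], by simp⟩
  | cons h q ih =>
    cases i with
    | zero => exact ⟨(Walk.cons h q).copy (by simp) rfl, by simp, by simp⟩
    | succ i =>
      obtain ⟨p, hl, he⟩ := ih i
      exact ⟨p, by simpa using hl, fun e hee => List.mem_cons_of_mem _ (he _ hee)⟩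

lemma dist_triangle' (h1 : G.Reachable a b) (h2 : G.Reachable b c) :
    G.dist a c ≤ G.dist a b + G.dist b c := by
  obtain ⟨p, hp⟩ := h1.exists_walk_length_eq_dist
  obtain ⟨q, hq⟩ := h2.exists_walk_length_eq_dist
  calc G.dist a c ≤ (p.append q).length := dist_le _
    _ = G.dist a b + G.dist b c := by rw [Walk.length_append, hp, hq]

lemma dist_getVert_left (w : G.Walk u v) (i : ℕ) : G.dist u (w.getVert i) ≤ i := by
  obtain ⟨p, hl, -⟩ := exists_prefix_walk w i
  refine (dist_le p).trans ?_
  rw [hl]; exact min_le_left _ _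

lemma dist_getVert_right (w : G.Walk u v) (i : ℕ) : G.dist (w.getVert i) v ≤ w.length - i := by
  obtain ⟨p, hl, -⟩ := exists_suffix_walk w i
  exact (dist_le p).trans hl.le

/-- In a shortest walk, distances from the endpoints to intermediate vertices are exact. -/
lemma dist_getVert_eq_left (w : G.Walk u v) (hw : w.length = G.dist u v) {i : ℕ}
    (hi : i ≤ w.length) : G.dist u (w.getVert i) = i ∧ G.dist (w.getVert i) v = w.length - i := by
  have h1 := dist_getVert_left w i
  have h2 := dist_getVert_right w i
  have hr1 : G.Reachable u (w.getVert i) := by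
    obtain ⟨p, -, -⟩ := exists_prefix_walk w i; exact ⟨p⟩
  have hr2 : G.Reachable (w.getVert i) v := by
    obtain ⟨p, -, -⟩ := exists_suffix_walk w i; exact ⟨p⟩
  have := dist_triangle' hr1 hr2
  omega

lemma mem_edges_iff_index (w : G.Walk u v) (e : Sym2 V) :
    e ∈ w.edges ↔ ∃ i, i < w.length ∧ e = s(w.getVert i, w.getVert (i+1)) := by
  induction w with
  | nil => simp
  | cons h q ih =>
    simp only [Walk.edges_cons, List.mem_cons, ih, Walk.length_cons]
    constructor
    · rintro (rfl | ⟨i, hi, rfl⟩)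
      · exact ⟨0, by simp [Walk.getVert_cons_succ], by
          simp [Walk.getVert_cons_succ, Walk.getVert_zero]⟩
      · exact ⟨i+1, by omega, by simp [Walk.getVert_cons_succ]⟩
    · rintro ⟨i, hi, rfl⟩
      cases i with
      | zero => left; simp [Walk.getVert_cons_succ]
      | succ i => right; exact ⟨i, by omega, by simp [Walk.getVert_cons_succ]⟩

open SimpleGraph Finset

noncomputable section Spanner
open Classical

variable {V : Type} [Fintype V] (G : SimpleGraph V)

/-- star edges of a family of (center, cluster) pairs -/
def stars (F : Finset (V × Finset V)) : Finset (Sym2 V) :=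
  F.biUnion (fun p => p.2.image (fun x => s(p.1, x)))

def EInit (F : Finset (V × Finset V)) : Finset (Sym2 V) :=
  (Finset.univ.filter (fun e => e ∈ G.edgeSet ∧
      ∃ x ∈ Finset.univ \ F.biUnion (·.2), x ∈ e)) ∪ stars F

def Hg (E : Finset (Sym2 V)) : SimpleGraph V := fromEdgeSet ↑E

def Dmin (s : V) (C : Finset V) : ℕ :=
  if h : C.Nonempty then (C.image (G.dist s)).min' (h.image _) else 0

def phi (E : Finset (Sym2 V)) (s : V) (p : V × Finset V) : ℤ :=
  if (Hg E).Reachable s p.1 ∧ p.2.Nonempty then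
    min 3 (((Hg E).dist s p.1 : ℤ) - (Dmin G s p.2 : ℤ) - 1)
  else 3

def Phi (S : Finset V) (F : Finset (V × Finset V)) (E : Finset (Sym2 V)) : ℤ :=
  ∑ s ∈ S, ∑ p ∈ F, phi G E s p

def sat (E : Finset (Sym2 V)) (u v : V) : Prop :=
  (Hg E).Reachable u v ∧ (Hg E).dist u v ≤ G.dist u v + 2

def step (E : Finset (Sym2 V)) (q : V × V) : Finset (Sym2 V) :=
  if h : G.Reachable q.1 q.2 ∧ ¬ sat G E q.1 q.2 then
    E ∪ (Classical.choose h.1.exists_walk_length_eq_dist).edges.toFinset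
  else E

def run (S : Finset V) (F : Finset (V × Finset V)) : Finset (Sym2 V) :=
  (S ×ˢ S).toList.foldl (step G) (EInit G F)

-- basic lemmas
lemma Hg_mono {E E' : Finset (Sym2 V)} (h : E ⊆ E') : Hg E ≤ Hg E' :=
  fromEdgeSet_mono (by exact_mod_cast h)

lemma Hg_le_G {E : Finset (Sym2 V)} (h : ↑E ⊆ G.edgeSet) : Hg E ≤ G := by
  intro a b hab
  rw [Hg, fromEdgeSet_adj] at hab
  exact (G.mem_edgeSet).1 (h hab.1)

lemma mem_Hg_edgeSet {E : Finset (Sym2 V)} (h : ↑E ⊆ G.edgeSet) {e : Sym2 V} (he : e ∈ E) :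
    e ∈ (Hg E : SimpleGraph V).edgeSet := by
  rw [Hg, edgeSet_fromEdgeSet]
  refine ⟨he, ?_⟩
  have := h he
  intro hd
  induction e
  next a b =>
    simp only [Sym2.diagSet, Set.mem_setOf_eq, Sym2.isDiag_iff_proj_eq] at hd
    exact (G.mem_edgeSet.1 this).ne hd

lemma subset_step (E : Finset (Sym2 V)) (q : V × V) : E ⊆ step G E q := by
  rw [step]; split
  · exact subset_union_left
  · exact subset_rfl

lemma step_subset_G {E : Finset (Sym2 V)} (h : ↑E ⊆ G.edgeSet) (q : V × V) :
    ↑(step G E q) ⊆ G.edgeSet := by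
  rw [step]; split
  · intro e he
    simp only [coe_union, Set.mem_union, mem_coe, List.mem_toFinset] at he
    rcases he with he | he
    · exact h he
    · exact Walk.edges_subset_edgeSet _ he
  · exact h

lemma sat_mono {E E' : Finset (Sym2 V)} (h : E ⊆ E') {u v : V} (hs : sat G E u v) :
    sat G E' u v := by
  obtain ⟨hr, hd⟩ := hs
  refine ⟨hr.mono (Hg_mono h), le_trans (hr.dist_anti (Hg_mono h)) hd⟩

lemma sat_step_self {E : Finset (Sym2 V)} (h : ↑E ⊆ G.edgeSet) {u v : V}
    (hr : G.Reachable u v) : sat G (step G E (u, v)) u v := by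
  rw [step]
  by_cases hc : G.Reachable (u,v).1 (u,v).2 ∧ ¬ sat G E (u,v).1 (u,v).2
  case neg =>
    rw [dif_neg hc]
    push_neg at hc
    exact hc hr
  case pos =>
    rw [dif_pos hc]
    obtain ⟨hG, hns⟩ := hc
    set w := Classical.choose hG.exists_walk_length_eq_dist with hw
    have hlen : w.length = G.dist u v := Classical.choose_spec hG.exists_walk_length_eq_dist
    have hsub : ↑(E ∪ w.edges.toFinset) ⊆ G.edgeSet := by
      intro e he
      simp only [coe_union, Set.mem_union, mem_coe, List.mem_toFinset] at he
      rcases he with he | he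
      · exact h he
      · exact Walk.edges_subset_edgeSet _ he
    have hedge : ∀ e ∈ w.edges, e ∈ (Hg (E ∪ w.edges.toFinset) : SimpleGraph V).edgeSet := by
      intro e he
      exact mem_Hg_edgeSet G hsub (by simp [he])
    let w' := w.transfer _ hedge
    refine ⟨⟨w'⟩, ?_⟩
    calc (Hg (E ∪ w.edges.toFinset)).dist u v ≤ w'.length := dist_le _
      _ = w.length := Walk.length_transfer _ _
      _ ≤ G.dist u v + 2 := by omega

lemma phi_le_three (E : Finset (Sym2 V)) (s : V) (p : V × Finset V) : phi G E s p ≤ 3 := by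
  rw [phi]; split
  · exact min_le_left _ _
  · exact le_refl 3

lemma phi_mono {E E' : Finset (Sym2 V)} (h : E ⊆ E') (s : V) (p : V × Finset V) :
    phi G E' s p ≤ phi G E s p := by
  by_cases hc : (Hg E).Reachable s p.1 ∧ p.2.Nonempty
  · have hr' : (Hg E').Reachable s p.1 := hc.1.mono (Hg_mono h)
    rw [phi, phi, if_pos hc, if_pos ⟨hr', hc.2⟩]
    have := hc.1.dist_anti (Hg_mono h)
    refine min_le_min le_rfl (by push_cast; omega)
  · have : phi G E s p = 3 := by rw [phi, if_neg hc]
    rw [this]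
    exact phi_le_three G E' s p
-- chunk c: Dmin lemmas, phi lower bound, fold lemmas
section ChunkC
open SimpleGraph Finset Classical

variable {V : Type} [Fintype V] (G : SimpleGraph V)

def StarF (F : Finset (V × Finset V)) : Prop :=
  ∀ p ∈ F, (∀ x ∈ p.2, G.Adj p.1 x) ∧ p.2.Nonempty

lemma Dmin_le {s a : V} {C : Finset V} (ha : a ∈ C) : Dmin G s C ≤ G.dist s a := by
  rw [Dmin, dif_pos ⟨a, ha⟩]
  exact Finset.min'_le _ _ (Finset.mem_image_of_mem _ ha)

lemma exists_Dmin {s : V} {C : Finset V} (h : C.Nonempty) :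
    ∃ a ∈ C, G.dist s a = Dmin G s C := by
  rw [Dmin, dif_pos h]
  have := Finset.min'_mem (C.image (G.dist s)) (h.image _)
  simpa using this

lemma dist_le_one_of_adj {a b : V} (h : G.Adj a b) : G.dist a b ≤ 1 := by
  have : (Walk.cons h .nil : G.Walk a b).length = 1 := by simp
  exact le_trans (dist_le _) this.le

lemma phi_ge {F : Finset (V × Finset V)} (hSF : StarF G F) {E : Finset (Sym2 V)}
    (hEG : ↑E ⊆ G.edgeSet) {s : V} {p : V × Finset V} (hp : p ∈ F) :
    -2 ≤ phi G E s p := by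
  rw [phi]
  split
  next hc =>
    obtain ⟨hr, hne⟩ := hc
    have h1 : G.dist s p.1 ≤ (Hg E).dist s p.1 := hr.dist_anti (Hg_le_G G hEG)
    obtain ⟨a, ha, hda⟩ := exists_Dmin G (s := s) hne
    have hadj : G.Adj p.1 a := (hSF p hp).1 a ha
    have h2 : G.dist s a ≤ G.dist s p.1 + 1 := by
      refine le_trans (dist_triangle' (hr.mono (Hg_le_G G hEG)) ⟨Walk.cons hadj .nil⟩) ?_
      have := dist_le_one_of_adj G hadj
      omega
    have h3 : Dmin G s p.2 ≤ G.dist s p.1 + 1 := by omega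
    have : (-2 : ℤ) ≤ ((Hg E).dist s p.1 : ℤ) - (Dmin G s p.2 : ℤ) - 1 := by push_cast; omega
    exact le_min (by norm_num) this
  next => norm_num

lemma foldl_subset (l : List (V × V)) (E : Finset (Sym2 V)) :
    E ⊆ l.foldl (step G) E := by
  induction l generalizing E with
  | nil => exact subset_rfl
  | cons q l ih => exact (subset_step G E q).trans (ih _)

lemma foldl_subG (l : List (V × V)) {E : Finset (Sym2 V)} (h : ↑E ⊆ G.edgeSet) :
    ↑(l.foldl (step G) E) ⊆ G.edgeSet := by
  induction l generalizing E with
  | nil => exact h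
  | cons q l ih => exact ih (step_subset_G G h q)

lemma sat_step_self' {E : Finset (Sym2 V)} (h : ↑E ⊆ G.edgeSet) (q : V × V)
    (hr : G.Reachable q.1 q.2) : sat G (step G E q) q.1 q.2 := by
  have := sat_step_self G h (u := q.1) (v := q.2) hr
  simpa using this

lemma foldl_sat (l : List (V × V)) {E : Finset (Sym2 V)} (h : ↑E ⊆ G.edgeSet) :
    ∀ q ∈ l, G.Reachable q.1 q.2 → sat G (l.foldl (step G) E) q.1 q.2 := by
  induction l generalizing E with
  | nil => intro q hq; exact absurd hq List.not_mem_nil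
  | cons q' l ih =>
    intro q hq hr
    rcases List.mem_cons.1 hq with rfl | hq'
    · have h1 := sat_step_self' G h q hr
      exact sat_mono G (foldl_subset G l _) h1
    · exact ih (step_subset_G G h q') q hq' hr

lemma foldl_card (S : Finset V) (F : Finset (V × Finset V)) (l : List (V × V))
    {E : Finset (Sym2 V)}
    (hstep : ∀ E' : Finset (Sym2 V), E ⊆ E' → ↑E' ⊆ G.edgeSet → ∀ q ∈ l,
      ((step G E' q).card : ℤ) ≤ E'.card + 3 * (Phi G S F E' - Phi G S F (step G E' q)))
    (hEG : ↑E ⊆ G.edgeSet) :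
    ((l.foldl (step G) E).card : ℤ) ≤
      E.card + 3 * (Phi G S F E - Phi G S F (l.foldl (step G) E)) := by
  induction l generalizing E with
  | nil => simp
  | cons q l ih =>
    have h1 := hstep E subset_rfl hEG q List.mem_cons_self
    have h2 := ih (E := step G E q)
      (fun E' hE' hE'G q' hq' => hstep E' ((subset_step G E q).trans hE') hE'G q'
        (List.mem_cons_of_mem _ hq'))
      (step_subset_G G hEG q)
    simp only [List.foldl_cons]
    omega
-- chunk d: distances between intermediate vertices of a shortest walk
section ChunkD
open SimpleGraph Finset Classical

variable {V : Type} {G : SimpleGraph V} {u v : V}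

lemma exists_mid_walk (w : G.Walk u v) (a b : ℕ) (hab : a ≤ b) :
    ∃ p : G.Walk (w.getVert a) (w.getVert b), p.length ≤ b - a := by
  induction w generalizing a b with
  | nil => exact ⟨(Walk.nil).copy rfl rfl, by simp⟩
  | cons h q ih =>
    cases a with
    | succ a =>
      cases b with
      | zero => omega
      | succ b =>
        obtain ⟨p, hp⟩ := ih a b (by omega)
        exact ⟨p.copy (by simp [Walk.getVert_cons_succ]) (by simp [Walk.getVert_cons_succ]), by
          simpa using hp.trans (by omega)⟩
    | zero =>
      cases b with
      | zero => exact ⟨(Walk.nil).copy rfl rfl, by simp⟩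
      | succ b =>
        obtain ⟨p, hl, -⟩ := exists_prefix_walk q b
        refine ⟨(Walk.cons h p).copy (Walk.getVert_zero _).symm (by rw [Walk.getVert_cons_succ]), ?_⟩
        simp only [Walk.length_copy, Walk.length_cons]
        have : min b q.length ≤ b := min_le_left _ _
        omega

lemma reachable_getVert (w : G.Walk u v) (a b : ℕ) :
    G.Reachable (w.getVert a) (w.getVert b) := by
  rcases le_total a b with h | h
  · obtain ⟨p, -⟩ := exists_mid_walk w a b h; exact ⟨p⟩
  · obtain ⟨p, -⟩ := exists_mid_walk w b a h; exact Reachable.symm ⟨p⟩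

lemma dist_getVert_between (w : G.Walk u v) (hw : w.length = G.dist u v) {a b : ℕ}
    (hab : a ≤ b) (hb : b ≤ w.length) :
    G.dist (w.getVert a) (w.getVert b) = b - a := by
  obtain ⟨p, hp⟩ := exists_mid_walk w a b hab
  have hle : G.dist (w.getVert a) (w.getVert b) ≤ b - a := (dist_le p).trans hp
  have h1 := dist_getVert_eq_left w hw (i := a) (by omega)
  have h2 := dist_getVert_eq_left w hw (i := b) hb
  have r0 : G.Reachable u (w.getVert a) := by
    have := reachable_getVert w 0 a; rwa [Walk.getVert_zero] at this
  have rL : G.Reachable (w.getVert b) v := by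
    have := reachable_getVert w b w.length; rwa [Walk.getVert_length] at this
  have rab := reachable_getVert w a b
  have htr1 : G.dist u v ≤ G.dist u (w.getVert a) + G.dist (w.getVert a) v :=
    dist_triangle' r0 (rab.trans rL)
  have htr2 : G.dist (w.getVert a) v ≤
      G.dist (w.getVert a) (w.getVert b) + G.dist (w.getVert b) v :=
    dist_triangle' rab rL
  omega

end ChunkD
-- chunk e: the heart lemma
section ChunkE
open SimpleGraph Finset Classical

variable {V : Type} [Fintype V] (G : SimpleGraph V)

lemma phi_reach_of_le {E : Finset (Sym2 V)} {s : V} {p : V × Finset V} {B : ℤ}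
    (hB : B ≤ 2) (h : phi G E s p ≤ B) :
    (Hg E).Reachable s p.1 ∧ ((Hg E).dist s p.1 : ℤ) ≤ B + Dmin G s p.2 + 1 := by
  rw [phi] at h
  split at h
  next hc =>
    refine ⟨hc.1, ?_⟩
    rcases min_le_iff.1 h with h' | h'
    · omega
    · omega
  next hc => omega

lemma heart (S : Finset V) (F : Finset (V × Finset V)) (hSF : StarF G F)
    {E : Finset (Sym2 V)} (hE0 : EInit G F ⊆ E) (hEG : ↑E ⊆ G.edgeSet)
    {q : V × V} (hq : q ∈ S ×ˢ S) :
    ((step G E q).card : ℤ) ≤ E.card + 3 * (Phi G S F E - Phi G S F (step G E q)) := by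
  obtain ⟨u, v⟩ := q
  obtain ⟨hu, hv⟩ := Finset.mem_product.1 hq
  by_cases hc : G.Reachable (u,v).1 (u,v).2 ∧ ¬ sat G E (u,v).1 (u,v).2
  case neg =>
    have heq : step G E (u,v) = E := by rw [step, dif_neg hc]
    rw [heq]; omega
  case pos =>
  obtain ⟨w, hlen, hstep⟩ : ∃ w : G.Walk u v,
      w.length = G.dist u v ∧ step G E (u,v) = E ∪ w.edges.toFinset := by
    refine ⟨Classical.choose (hc.1.exists_walk_length_eq_dist),
      Classical.choose_spec (hc.1.exists_walk_length_eq_dist), ?_⟩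
    rw [step, dif_pos hc]
  obtain ⟨hG, hns⟩ := hc
  simp only at hG hns
  rw [hstep]
  set E' := E ∪ w.edges.toFinset with hE'def
  have hEE' : E ⊆ E' := subset_union_left
  have hE'G : ↑E' ⊆ G.edgeSet := by
    intro e he
    simp only [hE'def, coe_union, Set.mem_union, mem_coe, List.mem_toFinset] at he
    rcases he with he | he
    · exact hEG he
    · exact Walk.edges_subset_edgeSet _ he
  set L := w.length with hLdef
  have hune : u ≠ v := by
    rintro rfl
    exact hns ⟨Reachable.refl u, by rw [dist_self]; omega⟩
  set I := (Finset.range L).filter (fun i => s(w.getVert i, w.getVert (i+1)) ∉ E) with hIdef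
  -- Step A : card bound
  have cardbound : (E'.card : ℤ) ≤ E.card + I.card := by
    have h1 : E'.card ≤ E.card + (w.edges.toFinset \ E).card := by
      rw [hE'def]
      have := Finset.card_union_le E (w.edges.toFinset \ E)
      rwa [Finset.union_sdiff_self_eq_union] at this
    have h2 : w.edges.toFinset \ E ⊆ I.image (fun i => s(w.getVert i, w.getVert (i+1))) := by
      intro e he
      obtain ⟨he1, he2⟩ := Finset.mem_sdiff.1 he
      obtain ⟨i, hi, rfl⟩ := (mem_edges_iff_index w e).1 (List.mem_toFinset.1 he1)
      exact Finset.mem_image.2 ⟨i, Finset.mem_filter.2 ⟨Finset.mem_range.2 hi, he2⟩, rfl⟩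
    have h3 : (w.edges.toFinset \ E).card ≤ I.card :=
      (Finset.card_le_card h2).trans (Finset.card_image_le)
    push_cast
    omega
  -- Step B : every missing right endpoint is clustered
  have hclustered : ∀ i ∈ I, ∃ p ∈ F, w.getVert (i+1) ∈ p.2 := by
    intro i hi
    obtain ⟨hiL, hie⟩ := Finset.mem_filter.1 hi
    have hiL' : i < L := Finset.mem_range.1 hiL
    by_contra hnp
    push_neg at hnp
    have hxU : w.getVert (i+1) ∈ Finset.univ \ F.biUnion (·.2) := by
      rw [Finset.mem_sdiff]
      exact ⟨Finset.mem_univ _, fun hmem => by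
        obtain ⟨p, hp, hxp⟩ := Finset.mem_biUnion.1 hmem
        exact hnp p hp hxp⟩
    have hedge : s(w.getVert i, w.getVert (i+1)) ∈ G.edgeSet := w.adj_getVert_succ hiL'
    have : s(w.getVert i, w.getVert (i+1)) ∈ EInit G F := by
      simp only [EInit, Finset.mem_union, Finset.mem_filter]
      exact Or.inl ⟨Finset.mem_univ _, hedge,
        ⟨w.getVert (i+1), hxU, Sym2.mem_iff.2 (Or.inr rfl)⟩⟩
    exact hie (hE0 this)
  set HC := F.filter (fun p => ∃ i ∈ I, w.getVert (i+1) ∈ p.2) with hHCdef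
  -- Step C : I.card ≤ 3 * HC.card
  have hIb : I.card ≤ 3 * HC.card := by
    have hsub : I ⊆ HC.biUnion (fun p => I.filter (fun i => w.getVert (i+1) ∈ p.2)) := by
      intro i hi
      obtain ⟨p, hp, hx⟩ := hclustered i hi
      exact Finset.mem_biUnion.2 ⟨p, Finset.mem_filter.2 ⟨hp, ⟨i, hi, hx⟩⟩,
        Finset.mem_filter.2 ⟨hi, hx⟩⟩
    have hfib : ∀ p ∈ HC, (I.filter (fun i => w.getVert (i+1) ∈ p.2)).card ≤ 3 := by
      intro p hp
      have hpF : p ∈ F := (Finset.mem_filter.1 hp).1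
      set fib := I.filter (fun i => w.getVert (i+1) ∈ p.2) with hfibdef
      rcases fib.eq_empty_or_nonempty with hfe | hfne
      · rw [hfe]; simp
      · set i0 := fib.min' hfne with hi0def
        have hi0 := fib.min'_mem hfne
        have hwithin : ∀ j ∈ fib, j ≤ i0 + 2 := by
          intro j hj
          by_contra hgt
          push_neg at hgt
          obtain ⟨hjI, hjx⟩ := Finset.mem_filter.1 hj
          obtain ⟨hi0I, hi0x⟩ := Finset.mem_filter.1 hi0
          have hjL : j < L := Finset.mem_range.1 (Finset.mem_filter.1 hjI).1
          have hd : G.dist (w.getVert (i0+1)) (w.getVert (j+1)) = (j+1) - (i0+1) :=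
            dist_getVert_between w hlen (by omega) (by omega)
          have hadj1 : G.Adj p.1 (w.getVert (i0+1)) := (hSF p hpF).1 _ hi0x
          have hadj2 : G.Adj p.1 (w.getVert (j+1)) := (hSF p hpF).1 _ hjx
          have hd2 : G.dist (w.getVert (i0+1)) (w.getVert (j+1)) ≤ 2 := by
            have ht := dist_triangle' (G := G) (Reachable.symm ⟨Walk.cons hadj1 .nil⟩)
              ⟨Walk.cons hadj2 .nil⟩
            have h1 := dist_le_one_of_adj G hadj1.symm
            have h2 := dist_le_one_of_adj G hadj2
            have h3 : G.dist (w.getVert (i0+1)) p.1 = G.dist p.1 (w.getVert (i0+1)) :=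
              SimpleGraph.dist_comm
            omega
          omega
        have : fib ⊆ Finset.Icc i0 (i0 + 2) := by
          intro j hj
          exact Finset.mem_Icc.2 ⟨fib.min'_le j hj, hwithin j hj⟩
        have := Finset.card_le_card this
        rwa [Nat.card_Icc, show i0 + 2 + 1 - i0 = 3 by omega] at this
    calc I.card ≤ (HC.biUnion (fun p => I.filter (fun i => w.getVert (i+1) ∈ p.2))).card :=
          Finset.card_le_card hsub
      _ ≤ ∑ p ∈ HC, (I.filter (fun i => w.getVert (i+1) ∈ p.2)).card :=
          Finset.card_biUnion_le
      _ ≤ ∑ _p ∈ HC, 3 := Finset.sum_le_sum hfib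
      _ = 3 * HC.card := by simp [Finset.sum_const, mul_comm]
  -- Step D : per-cluster potential drop
  have hdrop : ∀ p ∈ HC,
      1 ≤ (phi G E u p - phi G E' u p) + (phi G E v p - phi G E' v p) := by
    intro p hp
    obtain ⟨hpF, hex⟩ : p ∈ F ∧ ∃ i ∈ I, w.getVert (i+1) ∈ p.2 := by
      have := Finset.mem_filter.1 hp
      exact ⟨this.1, this.2⟩
    obtain ⟨i, hiI, hx⟩ := hex
    obtain ⟨hiL', hie⟩ := Finset.mem_filter.1 hiI
    have hiL : i < L := Finset.mem_range.1 hiL'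
    have hpos : i + 1 ≤ L := hiL
    obtain ⟨pw, hpwl, hpwe⟩ := exists_prefix_walk w (i+1)
    obtain ⟨sw, hswl, hswe⟩ := exists_suffix_walk w (i+1)
    have hgv := dist_getVert_eq_left w hlen (i := i+1) hpos
    have hstar : s(p.1, w.getVert (i+1)) ∈ stars F :=
      Finset.mem_biUnion.2 ⟨p, hpF, Finset.mem_image_of_mem _ hx⟩
    generalize hxdef : w.getVert (i+1) = x at pw sw hgv hx hstar
    have hdux : G.dist u x = i + 1 := hgv.1
    have hdxv : G.dist x v = L - (i+1) := hgv.2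
    have hCne : p.2.Nonempty := ⟨x, hx⟩
    have hcadj : ∀ y ∈ p.2, G.Adj p.1 y := (hSF p hpF).1
    -- reachability helpers in G
    have hrux : G.Reachable u x := ⟨pw⟩
    have hrxc : G.Reachable x p.1 := Reachable.symm ⟨Walk.cons (hcadj x hx) .nil⟩
    have hrxv : G.Reachable x v := ⟨sw⟩
    -- Dmin bounds
    have hDu_le : Dmin G u p.2 ≤ i + 1 := by
      have := Dmin_le G (s := u) hx
      omega
    have hDu_ge : i + 1 ≤ Dmin G u p.2 + 2 := by
      obtain ⟨a, ha, hda⟩ := exists_Dmin G (s := u) hCne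
      have hca : G.Reachable p.1 a := ⟨Walk.cons (hcadj a ha) .nil⟩
      have h1 : G.dist a x ≤ 2 := by
        have ht := dist_triangle' (G := G) hca.symm hrxc.symm
        have e1 := dist_le_one_of_adj G (hcadj a ha)
        have e2 := dist_le_one_of_adj G (hcadj x hx)
        have hcm : G.dist a p.1 = G.dist p.1 a := SimpleGraph.dist_comm
        omega
      have h2 : G.dist u x ≤ G.dist u a + G.dist a x :=
        dist_triangle' (hrux.trans (hrxc.trans hca)) (hca.symm.trans hrxc.symm)
      omega
    have hDv_le : Dmin G v p.2 ≤ L - (i+1) := by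
      have h1 := Dmin_le G (s := v) hx
      have hcm : G.dist v x = G.dist x v := SimpleGraph.dist_comm
      omega
    have hDv_ge : L - (i+1) ≤ Dmin G v p.2 + 2 := by
      obtain ⟨a, ha, hda⟩ := exists_Dmin G (s := v) hCne
      have hca : G.Reachable p.1 a := ⟨Walk.cons (hcadj a ha) .nil⟩
      have h1 : G.dist x a ≤ 2 := by
        have ht := dist_triangle' (G := G) hrxc hca
        have e1 := dist_le_one_of_adj G (hcadj a ha)
        have e2 := dist_le_one_of_adj G (hcadj x hx)
        have hcm : G.dist x p.1 = G.dist p.1 x := SimpleGraph.dist_comm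
        omega
      have h2 : G.dist x v ≤ G.dist x a + G.dist a v :=
        dist_triangle' (hrxc.trans hca) (hrxv.symm.trans (hrxc.trans hca)).symm
      have hcm : G.dist a v = G.dist v a := SimpleGraph.dist_comm
      omega
    -- post-buy distances in Hg E'
    have hwsubE' : ∀ e ∈ w.edges, e ∈ (Hg E' : SimpleGraph V).edgeSet := fun e he =>
      mem_Hg_edgeSet G hE'G (Finset.mem_union_right _ (List.mem_toFinset.2 he))
    have hrux' : (Hg E').Reachable u x := ⟨pw.transfer _ (fun e he => hwsubE' e (hpwe e he))⟩
    have hrxv' : (Hg E').Reachable x v := ⟨sw.transfer _ (fun e he => hwsubE' e (hswe e he))⟩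
    have hdux' : (Hg E').dist u x ≤ i + 1 := by
      have hh := dist_le (pw.transfer _ (fun e he => hwsubE' e (hpwe e he)))
      rw [Walk.length_transfer] at hh
      have hm : min (i+1) L ≤ i + 1 := min_le_left _ _
      omega
    have hdxv' : (Hg E').dist x v ≤ L - (i+1) := by
      have hh := dist_le (sw.transfer _ (fun e he => hwsubE' e (hswe e he)))
      rw [Walk.length_transfer] at hh
      omega
    have hxc' : (Hg E').Adj x p.1 := by
      have hmem : s(x, p.1) ∈ E' := by
        rw [Sym2.eq_swap]
        exact hEE' (hE0 (Finset.mem_union_right _ hstar))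
      rw [Hg, fromEdgeSet_adj]
      exact ⟨hmem, (hcadj x hx).ne'⟩
    have hrxc' : (Hg E').Reachable x p.1 := ⟨Walk.cons hxc' .nil⟩
    have hduc' : (Hg E').dist u p.1 ≤ (i + 1) + 1 := by
      have ht := dist_triangle' hrux' hrxc'
      have h1 := dist_le_one_of_adj (Hg E') hxc'
      omega
    have hdvc' : (Hg E').dist v p.1 ≤ (L - (i+1)) + 1 := by
      have ht := dist_triangle' hrxv'.symm hrxc'
      have h1 := dist_le_one_of_adj (Hg E') hxc'
      have hcm : (Hg E').dist v x = (Hg E').dist x v := SimpleGraph.dist_comm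
      omega
    -- phi post bounds
    have hphiu' : phi G E' u p ≤ (i + 1 : ℤ) - Dmin G u p.2 := by
      rw [phi, if_pos ⟨hrux'.trans hrxc', hCne⟩]
      refine (min_le_right _ _).trans ?_
      push_cast
      omega
    have hphiv' : phi G E' v p ≤ (L : ℤ) - (i + 1) - Dmin G v p.2 := by
      rw [phi, if_pos ⟨hrxv'.symm.trans hrxc', hCne⟩]
      refine (min_le_right _ _).trans ?_
      have hns' : ((L - (i+1) : ℕ) : ℤ) = (L : ℤ) - (i+1) := by
        push_cast [Nat.cast_sub hpos]; ring
      push_cast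
      omega
    -- pre-buy dichotomy
    have hkey : (i + 1 : ℤ) - Dmin G u p.2 + 1 ≤ phi G E u p ∨
        (L : ℤ) - (i + 1) - Dmin G v p.2 + 1 ≤ phi G E v p := by
      by_contra hno
      push_neg at hno
      obtain ⟨h1, h2⟩ := hno
      have hc1 : ((L - (i+1) : ℕ) : ℤ) = (L : ℤ) - (i+1) := by
        push_cast [Nat.cast_sub hpos]; ring
      have hb1' : phi G E u p ≤ (i + 1 : ℤ) - Dmin G u p.2 := by omega
      have hcap1 : (i + 1 : ℤ) - Dmin G u p.2 ≤ 2 := by omega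
      have hb2' : phi G E v p ≤ (L : ℤ) - (i + 1) - Dmin G v p.2 := by omega
      have hcap2 : (L : ℤ) - (i + 1) - Dmin G v p.2 ≤ 2 := by omega
      have B1 := phi_reach_of_le G hcap1 hb1'
      have B2 := phi_reach_of_le G hcap2 hb2'
      refine hns ⟨B1.1.trans B2.1.symm, ?_⟩
      have ht : (Hg E).dist u v ≤ (Hg E).dist u p.1 + (Hg E).dist p.1 v :=
        dist_triangle' B1.1 B2.1.symm
      have hcomm : (Hg E).dist p.1 v = (Hg E).dist v p.1 := SimpleGraph.dist_comm
      have hb1 := B1.2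
      have hb2 := B2.2
      have hL : (L : ℤ) = (G.dist u v : ℤ) := by exact_mod_cast hlen
      omega
    have m1 : phi G E' u p ≤ phi G E u p := phi_mono G hEE' u p
    have m2 : phi G E' v p ≤ phi G E v p := phi_mono G hEE' v p
    have hDug : ((Dmin G u p.2 : ℕ) : ℤ) ≤ i + 1 := by exact_mod_cast hDu_le
    have hc1 : ((L - (i+1) : ℕ) : ℤ) = (L : ℤ) - (i+1) := by
      push_cast [Nat.cast_sub hpos]; ring
    have hDvg : ((Dmin G v p.2 : ℕ) : ℤ) ≤ (L : ℤ) - (i+1) := by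
      rw [← hc1]; exact_mod_cast hDv_le
    rcases hkey with hk | hk
    · omega
    · omega
  -- Step E : HC.card ≤ Phi E - Phi E'
  have hPhib : (HC.card : ℤ) ≤ Phi G S F E - Phi G S F E' := by
    have hdiff : Phi G S F E - Phi G S F E' =
        ∑ z ∈ S ×ˢ F, (phi G E z.1 z.2 - phi G E' z.1 z.2) := by
      rw [Phi, Phi, ← Finset.sum_sub_distrib, Finset.sum_product]
      refine Finset.sum_congr rfl (fun s _ => ?_)
      rw [← Finset.sum_sub_distrib]
    have hnonneg : ∀ z ∈ S ×ˢ F, 0 ≤ phi G E z.1 z.2 - phi G E' z.1 z.2 := fun z _ =>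
      sub_nonneg.2 (phi_mono G hEE' z.1 z.2)
    have hsubset : ({u, v} : Finset V) ×ˢ HC ⊆ S ×ˢ F := by
      refine Finset.product_subset_product ?_ (Finset.filter_subset _ _)
      intro z hz
      rcases Finset.mem_insert.1 hz with rfl | hz
      · exact hu
      · rw [Finset.mem_singleton.1 hz]; exact hv
    have h1 : ∑ z ∈ ({u, v} : Finset V) ×ˢ HC, (phi G E z.1 z.2 - phi G E' z.1 z.2) ≤
        Phi G S F E - Phi G S F E' := by
      rw [hdiff]
      exact Finset.sum_le_sum_of_subset_of_nonneg hsubset (fun z hz _ => hnonneg z hz)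
    have h2 : ∑ z ∈ ({u, v} : Finset V) ×ˢ HC, (phi G E z.1 z.2 - phi G E' z.1 z.2) =
        ∑ p ∈ HC, ((phi G E u p - phi G E' u p) + (phi G E v p - phi G E' v p)) := by
      rw [Finset.sum_product]
      rw [Finset.sum_insert (by simpa using hune), Finset.sum_singleton]
      rw [← Finset.sum_add_distrib]
    have h3 : (HC.card : ℤ) ≤
        ∑ p ∈ HC, ((phi G E u p - phi G E' u p) + (phi G E v p - phi G E' v p)) := by
      calc (HC.card : ℤ) = ∑ _p ∈ HC, (1 : ℤ) := by rw [Finset.sum_const, nsmul_eq_mul, mul_one]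
        _ ≤ _ := Finset.sum_le_sum hdrop
    omega
  have : (I.card : ℤ) ≤ 3 * HC.card := by exact_mod_cast hIb
  omega

end ChunkE
-- chunk f: maximal family, counting, Phi bounds
section ChunkF
open SimpleGraph Finset Classical

variable {V : Type} [Fintype V] (G : SimpleGraph V)

def ValidFam (b : ℕ) (F : Finset (V × Finset V)) : Prop :=
  (∀ p ∈ F, p.2.card = b + 1 ∧ ∀ x ∈ p.2, G.Adj p.1 x) ∧
  (∀ p ∈ F, ∀ q ∈ F, p ≠ q → Disjoint p.2 q.2)

lemma exists_max_fam (b : ℕ) :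
    ∃ F : Finset (V × Finset V), ValidFam G b F ∧
      ∀ v : V, (((Finset.univ \ F.biUnion (·.2)) : Finset V).filter (G.Adj v)).card ≤ b := by
  obtain ⟨F, hF, hmax⟩ := Finset.exists_max_image
    ((Finset.univ : Finset (Finset (V × Finset V))).filter (ValidFam G b))
    (fun F => F.card) ⟨∅, by
      simp only [Finset.mem_filter, Finset.mem_univ, true_and]
      exact ⟨fun p hp => absurd hp (Finset.notMem_empty p),
             fun p hp => absurd hp (Finset.notMem_empty p)⟩⟩
  have hFval : ValidFam G b F := (Finset.mem_filter.1 hF).2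
  refine ⟨F, hFval, fun v => ?_⟩
  by_contra hbig
  push_neg at hbig
  obtain ⟨C, hCsub, hCcard⟩ := Finset.exists_subset_card_eq (n := b + 1) hbig
  have hCU : C ⊆ Finset.univ \ F.biUnion (·.2) :=
    hCsub.trans (Finset.filter_subset _ _)
  have hCadj : ∀ x ∈ C, G.Adj v x := fun x hx =>
    (Finset.mem_filter.1 (hCsub hx)).2
  have hCnotin : (v, C) ∉ F := by
    intro hmem
    have hC1 : C ⊆ F.biUnion (·.2) := fun x hx => Finset.mem_biUnion.2 ⟨(v, C), hmem, hx⟩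
    have : C.Nonempty := Finset.card_pos.1 (by omega)
    obtain ⟨x, hx⟩ := this
    have := Finset.mem_sdiff.1 (hCU hx)
    exact this.2 (hC1 hx)
  have hval' : ValidFam G b (insert (v, C) F) := by
    constructor
    · intro p hp
      rcases Finset.mem_insert.1 hp with rfl | hp
      · exact ⟨hCcard, hCadj⟩
      · exact hFval.1 p hp
    · intro p hp q hq hne
      have hdisjC : ∀ r ∈ F, Disjoint C r.2 := by
        intro r hr
        rw [Finset.disjoint_left]
        intro x hxC hxr
        have := (Finset.mem_sdiff.1 (hCU hxC)).2
        exact this (Finset.mem_biUnion.2 ⟨r, hr, hxr⟩)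
      rcases Finset.mem_insert.1 hp with rfl | hp <;>
        rcases Finset.mem_insert.1 hq with h' | hq'
      · exact absurd h'.symm hne
      · exact hdisjC q hq'
      · rw [h']; exact (hdisjC p hp).symm
      · exact hFval.2 p hp q hq' hne
  have hmem' : insert (v, C) F ∈
      (Finset.univ : Finset (Finset (V × Finset V))).filter (ValidFam G b) := by
    rw [Finset.mem_filter]
    exact ⟨Finset.mem_univ _, hval'⟩
  have := hmax _ hmem'
  rw [Finset.card_insert_of_notMem hCnotin] at this
  omega

lemma EInit_card_bound (b : ℕ) (F : Finset (V × Finset V)) (hFval : ValidFam G b F)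
    (hmax : ∀ v : V, (((Finset.univ \ F.biUnion (·.2)) : Finset V).filter (G.Adj v)).card ≤ b) :
    (EInit G F).card ≤ Fintype.card V * b + Fintype.card V := by
  have h2 : (stars F).card ≤ Fintype.card V := by
    refine (Finset.card_biUnion_le).trans ?_
    have hle : ∀ p ∈ F, (p.2.image (fun x => s(p.1, x))).card ≤ p.2.card :=
      fun p _ => Finset.card_image_le
    refine (Finset.sum_le_sum hle).trans ?_
    rw [← Finset.card_biUnion (fun p hp q hq hne => hFval.2 p hp q hq hne)]
    exact (Finset.card_le_card (Finset.subset_univ _)).trans (by rw [Finset.card_univ])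
  simp only [EInit]
  refine le_trans (Finset.card_union_le _ _) ?_
  have hmain : ∀ A : Finset (Sym2 V),
      A ⊆ (Finset.univ \ F.biUnion (·.2)).biUnion
        (fun x => (Finset.univ.filter (G.Adj x)).image (fun y => s(x,y))) →
      A.card ≤ Fintype.card V * b := by
    intro A hA
    refine (Finset.card_le_card hA).trans ?_
    refine (Finset.card_biUnion_le).trans ?_
    have hdeg : ∀ x : V, ((Finset.univ.filter (G.Adj x)).image (fun y => s(x,y))).card ≤
        (Finset.univ.filter (G.Adj x)).card := fun x => Finset.card_image_le
    refine (Finset.sum_le_sum (fun x _ => hdeg x)).trans ?_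
    have hswap : ∑ x ∈ (Finset.univ \ F.biUnion (·.2)), (Finset.univ.filter (G.Adj x)).card =
        ∑ y ∈ (Finset.univ : Finset V),
          ((Finset.univ \ F.biUnion (·.2)).filter (fun x => G.Adj x y)).card := by
      simp only [Finset.card_filter]
      exact Finset.sum_comm
    rw [hswap]
    have hbnd : ∀ y : V, ((Finset.univ \ F.biUnion (·.2)).filter (fun x => G.Adj x y)).card ≤ b := by
      intro y
      have heq : (Finset.univ \ F.biUnion (·.2)).filter (fun x => G.Adj x y) =
          (Finset.univ \ F.biUnion (·.2)).filter (G.Adj y) := by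
        apply Finset.filter_congr
        intro x _
        simp [G.adj_comm]
      rw [heq]
      exact hmax y
    refine (Finset.sum_le_sum (fun y _ => hbnd y)).trans ?_
    simp [Finset.sum_const, Finset.card_univ]
  refine Nat.add_le_add (hmain _ ?_) h2
  intro e he
  simp only [Finset.mem_filter] at he
  obtain ⟨-, hedge, x, hxU, hxe⟩ := he
  induction e with
  | _ a c =>
    rcases Sym2.mem_iff.1 hxe with rfl | rfl
    · exact Finset.mem_biUnion.2 ⟨x, hxU, Finset.mem_image.2 ⟨c,
        Finset.mem_filter.2 ⟨Finset.mem_univ _, G.mem_edgeSet.1 hedge⟩, rfl⟩⟩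
    · refine Finset.mem_biUnion.2 ⟨x, hxU, Finset.mem_image.2 ⟨a,
        Finset.mem_filter.2 ⟨Finset.mem_univ _, (G.mem_edgeSet.1 hedge).symm⟩, ?_⟩⟩
      rw [Sym2.eq_swap]


lemma fam_card_bound (b : ℕ) (F : Finset (V × Finset V)) (hFval : ValidFam G b F) :
    F.card * (b + 1) ≤ Fintype.card V := by
  have h1 : ∑ p ∈ F, p.2.card = (F.biUnion (·.2)).card :=
    (Finset.card_biUnion (fun p hp q hq hne => hFval.2 p hp q hq hne)).symm
  have h2 : ∑ p ∈ F, p.2.card = F.card * (b + 1) := by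
    rw [Finset.sum_congr rfl (fun p hp => (hFval.1 p hp).1), Finset.sum_const, smul_eq_mul]
  rw [← h2, h1]
  exact (Finset.card_le_card (Finset.subset_univ _)).trans (by rw [Finset.card_univ])

lemma Phi_upper (S : Finset V) (F : Finset (V × Finset V)) (E : Finset (Sym2 V)) :
    Phi G S F E ≤ 3 * (S.card * F.card) := by
  rw [Phi]
  have h : ∀ s ∈ S, ∑ p ∈ F, phi G E s p ≤ (F.card : ℤ) * 3 := by
    intro s _
    have := Finset.sum_le_sum (s := F) (fun p _ => phi_le_three G E s p)
    rwa [Finset.sum_const, nsmul_eq_mul] at this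
  have h2 := Finset.sum_le_sum (s := S) h
  rw [Finset.sum_const, nsmul_eq_mul] at h2
  refine h2.trans (le_of_eq ?_)
  push_cast
  ring

lemma Phi_lower (S : Finset V) {F : Finset (V × Finset V)} (hSF : StarF G F)
    {E : Finset (Sym2 V)} (hEG : ↑E ⊆ G.edgeSet) :
    -2 * (S.card * F.card : ℤ) ≤ Phi G S F E := by
  rw [Phi]
  have h : ∀ s ∈ S, (F.card : ℤ) * (-2) ≤ ∑ p ∈ F, phi G E s p := by
    intro s _
    have := Finset.sum_le_sum (s := F) (fun p hp => phi_ge G hSF hEG (s := s) hp)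
    rwa [Finset.sum_const, nsmul_eq_mul] at this
  have h2 := Finset.sum_le_sum (s := S) h
  rw [Finset.sum_const, nsmul_eq_mul] at h2
  refine le_trans (le_of_eq ?_) h2
  push_cast
  ring

lemma ValidFam_StarF {b : ℕ} {F : Finset (V × Finset V)} (hFval : ValidFam G b F) :
    StarF G F := by
  intro p hp
  refine ⟨(hFval.1 p hp).2, ?_⟩
  have := (hFval.1 p hp).1
  exact Finset.card_pos.1 (by omega)

end ChunkF
-- chunk g: final theorem
section Final
open SimpleGraph Finset Classical

/-- **Subsetwise spanner** (Theorem 3 of the paper).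
There is an absolute constant `c > 0` such that for every finite simple graph `G`
on `n` vertices and every `S ⊆ V`, there is a spanning subgraph `H ≤ G` with at
most `c · n · √|S|` edges such that `δ_H(u,v) ≤ δ_G(u,v) + 2` for all `u, v ∈ S`
in the same connected component of `G`. -/
theorem subsetwise_spanner :
    ∃ c : ℝ, 0 < c ∧
      ∀ (V : Type) [Fintype V] (G : SimpleGraph V) (S : Finset V),
        ∃ H : SimpleGraph V, H ≤ G ∧
          (H.edgeSet.ncard : ℝ) ≤ c * (Fintype.card V : ℝ) * Real.sqrt (S.card : ℝ) ∧
          ∀ u ∈ S, ∀ v ∈ S, G.Reachable u v →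
            H.Reachable u v ∧ H.dist u v ≤ G.dist u v + 2 := by
  refine ⟨20, by norm_num, ?_⟩
  intro V _ G S
  by_cases hS : S.card = 0
  · refine ⟨⊥, bot_le, ?_, ?_⟩
    · rw [hS]
      simp [Set.ncard_empty]
    · intro u hu v hv
      have hSe : S = ∅ := Finset.card_eq_zero.1 hS
      rw [hSe] at hu
      exact absurd hu (Finset.notMem_empty u)
  · have hk : 1 ≤ S.card := Nat.pos_of_ne_zero hS
    obtain ⟨F, hFval, hmax⟩ := exists_max_fam G (Nat.sqrt S.card)
    have hSF := ValidFam_StarF G hFval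
    have hEInitG : ↑(EInit G F) ⊆ G.edgeSet := by
      intro e he
      have he' : e ∈ EInit G F := he
      simp only [EInit, Finset.mem_union, Finset.mem_filter] at he'
      rcases he' with ⟨-, hedge, -⟩ | hst
      · exact hedge
      · obtain ⟨p, hp, hx⟩ := Finset.mem_biUnion.1 hst
        obtain ⟨x, hxp, rfl⟩ := Finset.mem_image.1 hx
        exact G.mem_edgeSet.2 ((hFval.1 p hp).2 x hxp)
    set ER := (S ×ˢ S).toList.foldl (step G) (EInit G F) with hERdef
    have hsubstart : EInit G F ⊆ ER := foldl_subset G _ _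
    have hERG : ↑ER ⊆ G.edgeSet := foldl_subG G _ hEInitG
    refine ⟨Hg ER, Hg_le_G G hERG, ?_, ?_⟩
    · -- edge counting
      have hcount := foldl_card G S F (S ×ˢ S).toList (E := EInit G F)
        (fun E' hE' hE'G q hq =>
          heart G S F hSF hE' hE'G (Finset.mem_toList.1 hq)) hEInitG
      have hup := Phi_upper G S F (EInit G F)
      have hlow := Phi_lower G S hSF (E := ER) hERG
      have hEIc := EInit_card_bound G (Nat.sqrt S.card) F hFval hmax
      have hfam := fam_card_bound G (Nat.sqrt S.card) F hFval
      rw [← hERdef] at hcount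
      have hZ : (ER.card : ℤ) ≤ (Fintype.card V) * (Nat.sqrt S.card) + Fintype.card V
          + 15 * ((S.card : ℤ) * F.card) := by omega
      have hncard : (Hg ER : SimpleGraph V).edgeSet.ncard ≤ ER.card := by
        have hsub : (Hg ER : SimpleGraph V).edgeSet ⊆ ↑ER := by
          rw [Hg, edgeSet_fromEdgeSet]
          exact Set.diff_subset
        have := Set.ncard_le_ncard hsub (ER.finite_toSet)
        rwa [Set.ncard_coe_finset] at this
      -- real number arithmetic
      have hk0 : (0 : ℝ) ≤ (S.card : ℝ) := by positivity
      have hsq0 : (0 : ℝ) ≤ Real.sqrt (S.card : ℝ) := Real.sqrt_nonneg _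
      have hN0 : (0 : ℝ) ≤ (Fintype.card V : ℝ) := by positivity
      have hA0 : (0 : ℝ) ≤ (F.card : ℝ) := by positivity
      have hb0 : (0 : ℝ) ≤ ((Nat.sqrt S.card : ℕ) : ℝ) := by positivity
      have hbR : ((Nat.sqrt S.card : ℕ) : ℝ) ≤ Real.sqrt (S.card : ℝ) := by
        have h1 : (((Nat.sqrt S.card : ℕ) : ℝ))^2 ≤ (S.card : ℝ) := by
          exact_mod_cast Nat.sqrt_le' S.card
        calc ((Nat.sqrt S.card : ℕ) : ℝ) = Real.sqrt ((((Nat.sqrt S.card : ℕ) : ℝ))^2) :=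
              (Real.sqrt_sq hb0).symm
          _ ≤ Real.sqrt (S.card : ℝ) := Real.sqrt_le_sqrt h1
      have hsqb : Real.sqrt (S.card : ℝ) ≤ ((Nat.sqrt S.card : ℕ) : ℝ) + 1 := by
        have h1 : (S.card : ℝ) ≤ (((Nat.sqrt S.card : ℕ) : ℝ) + 1)^2 := by
          have hnat : S.card ≤ (Nat.sqrt S.card + 1) * (Nat.sqrt S.card + 1) :=
            le_of_lt (Nat.lt_succ_sqrt S.card)
          have hc := (Nat.cast_le (α := ℝ)).2 hnat
          push_cast at hc
          nlinarith [hc]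
        calc Real.sqrt (S.card : ℝ) ≤ Real.sqrt ((((Nat.sqrt S.card : ℕ) : ℝ) + 1)^2) :=
              Real.sqrt_le_sqrt h1
          _ = ((Nat.sqrt S.card : ℕ) : ℝ) + 1 := Real.sqrt_sq (by positivity)
      have h1R : 1 ≤ Real.sqrt (S.card : ℝ) := by
        rw [show (1:ℝ) = Real.sqrt 1 by simp]
        exact Real.sqrt_le_sqrt (by exact_mod_cast hk)
      have hKsq : Real.sqrt (S.card : ℝ) * Real.sqrt (S.card : ℝ) = (S.card : ℝ) :=
        Real.mul_self_sqrt hk0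
      have hfamR : (F.card : ℝ) * (((Nat.sqrt S.card : ℕ) : ℝ) + 1) ≤ (Fintype.card V : ℝ) := by
        exact_mod_cast hfam
      have hR1 : (ER.card : ℝ) ≤ (Fintype.card V : ℝ) * ((Nat.sqrt S.card : ℕ) : ℝ)
          + (Fintype.card V : ℝ) + 15 * ((S.card : ℝ) * (F.card : ℝ)) := by
        exact_mod_cast hZ
      have hncardR : ((Hg ER : SimpleGraph V).edgeSet.ncard : ℝ) ≤ (ER.card : ℝ) := by
        exact_mod_cast hncard
      have t1 : (Fintype.card V : ℝ) * ((Nat.sqrt S.card : ℕ) : ℝ) ≤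
          (Fintype.card V : ℝ) * Real.sqrt (S.card : ℝ) :=
        mul_le_mul_of_nonneg_left hbR hN0
      have t2 : (Fintype.card V : ℝ) ≤ (Fintype.card V : ℝ) * Real.sqrt (S.card : ℝ) := by
        nlinarith [h1R, hN0]
      have t3 : 15 * ((S.card : ℝ) * (F.card : ℝ)) ≤
          15 * (Real.sqrt (S.card : ℝ) * (Fintype.card V : ℝ)) := by
        have e1 : Real.sqrt (S.card : ℝ) * (F.card : ℝ) ≤
            (((Nat.sqrt S.card : ℕ) : ℝ) + 1) * (F.card : ℝ) :=
          mul_le_mul_of_nonneg_right hsqb hA0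
        have e2 : (S.card : ℝ) * (F.card : ℝ) =
            Real.sqrt (S.card : ℝ) * (Real.sqrt (S.card : ℝ) * (F.card : ℝ)) := by
          rw [← mul_assoc, hKsq]
        rw [e2]
        have e3 : Real.sqrt (S.card : ℝ) * (Real.sqrt (S.card : ℝ) * (F.card : ℝ)) ≤
            Real.sqrt (S.card : ℝ) * ((((Nat.sqrt S.card : ℕ) : ℝ) + 1) * (F.card : ℝ)) :=
          mul_le_mul_of_nonneg_left e1 hsq0
        have e4 : (((Nat.sqrt S.card : ℕ) : ℝ) + 1) * (F.card : ℝ) ≤ (Fintype.card V : ℝ) := by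
          nlinarith [hfamR]
        nlinarith [e3, e4, hsq0]
      have hfin : (Fintype.card V : ℝ) * Real.sqrt (S.card : ℝ) ≥ 0 := by positivity
      calc ((Hg ER : SimpleGraph V).edgeSet.ncard : ℝ) ≤ (ER.card : ℝ) := hncardR
        _ ≤ _ := hR1
        _ ≤ 20 * (Fintype.card V : ℝ) * Real.sqrt (S.card : ℝ) := by nlinarith [t1, t2, t3, hfin]
    · intro u hu v hv hr
      have hsat := foldl_sat G (S ×ˢ S).toList hEInitG (u, v)
        (Finset.mem_toList.2 (Finset.mem_product.2 ⟨hu, hv⟩)) hr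
      exact ⟨hsat.1, hsat.2⟩

end Final
end ChunkC
end Spanner
end

section
/- There exists an absolute constant c > 0 such that the following holds. For every real β with 0 ≤ β ≤ 1 and every finite simple undirected unweighted graph G = (V, E) on n vertices, there exist a collection 𝒞 = {C_1, ..., C_q} of pairwise disjoint nonempty subsets of V with q ≤ n^{1-β}, and a spanning subgraph H of G with at most c · n^{1+β} edges, such that: (1) every edge uv of G that is not an edge of H has its two endpoints in two different clusters of 𝒞 (in particular both endpoints lie in some cluster), and (2) any two vertices belonging to the same cluster of 𝒞 are at distance at most 2 in H. -/
open Finset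

lemma greedy_clustering (V : Type) [Fintype V] [DecidableEq V] (G : SimpleGraph V)
    [DecidableRel G.Adj] (D : ℕ) (hD : 1 ≤ D) (U : Finset V) :
    ∃ 𝒞 : Finset (Finset V),
      (∀ C ∈ 𝒞, C.card = D ∧ C ⊆ U ∧ ∃ v, ∀ u ∈ C, G.Adj v u) ∧
      ((𝒞 : Set (Finset V)).Pairwise fun C₁ C₂ => Disjoint C₁ C₂) ∧
      (∀ x : V, ((U \ 𝒞.biUnion id).filter (fun u => G.Adj x u)).card < D) := by
  induction U using Finset.strongInduction with
  | _ U ih =>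
    by_cases h : ∃ x : V, D ≤ (U.filter (fun u => G.Adj x u)).card
    · obtain ⟨x, hx⟩ := h
      obtain ⟨C, hCsub, hCcard⟩ := Finset.exists_subset_card_eq hx
      have hCU : C ⊆ U := hCsub.trans (Finset.filter_subset _ _)
      have hCne : C.Nonempty := by
        rw [← Finset.card_pos, hCcard]; omega
      obtain ⟨𝒞', h1, h2, h3⟩ := ih (U \ C) (Finset.sdiff_ssubset hCU hCne)
      have hCnot : C ∉ 𝒞' := by
        intro hmem
        have := (h1 C hmem).2.1
        obtain ⟨y, hy⟩ := hCne
        exact (Finset.mem_sdiff.mp (this hy)).2 hy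
      refine ⟨insert C 𝒞', ?_, ?_, ?_⟩
      · intro C' hC'
        rcases Finset.mem_insert.mp hC' with rfl | hC'
        · exact ⟨hCcard, hCU, x, fun u hu => (Finset.mem_filter.mp (hCsub hu)).2⟩
        · obtain ⟨a, b, c⟩ := h1 C' hC'
          exact ⟨a, b.trans (Finset.sdiff_subset), c⟩
      · rw [Finset.coe_insert]
        refine h2.insert ?_
        intro C' hC' hne
        have hdisj : Disjoint C' C :=
          Finset.disjoint_of_subset_left (h1 C' hC').2.1 Finset.sdiff_disjoint
        exact ⟨hdisj.symm, hdisj⟩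
      · intro y
        have : U \ (insert C 𝒞').biUnion id = (U \ C) \ 𝒞'.biUnion id := by
          ext z
          simp only [Finset.biUnion_insert, Finset.mem_sdiff, Finset.mem_union]
          tauto
        rw [this]
        exact h3 y
    · push_neg at h
      refine ⟨∅, by simp, by simp, fun x => ?_⟩
      simpa using h x

/-- **Clustering lemma** (Lemma 1 of the paper).
There is an absolute constant `c > 0` such that for every `β ∈ [0,1]` and every
finite simple graph `G` on `n` vertices there are a clustering `𝒞` with at most
`n^{1-β}` pairwise disjoint nonempty clusters and a spanning subgraph `H ≤ G`
with at most `c · n^{1+β}` edges satisfying the missing-edge property (every edge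
of `G` absent from `H` has its endpoints in two different clusters) and the
cluster-diameter property (any two vertices of the same cluster are at distance
at most `2` in `H`). -/
theorem clustering_lemma :
    ∃ c : ℝ, 0 < c ∧
      ∀ β : ℝ, 0 ≤ β → β ≤ 1 →
      ∀ (V : Type) [Fintype V] [DecidableEq V] (G : SimpleGraph V),
        ∃ (𝒞 : Finset (Finset V)) (H : SimpleGraph V), H ≤ G ∧
          (∀ C ∈ 𝒞, C.Nonempty) ∧
          ((𝒞 : Set (Finset V)).Pairwise fun C₁ C₂ => Disjoint C₁ C₂) ∧
          (𝒞.card : ℝ) ≤ (Fintype.card V : ℝ) ^ ((1 : ℝ) - β) ∧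
          (H.edgeSet.ncard : ℝ) ≤ c * (Fintype.card V : ℝ) ^ ((1 : ℝ) + β) ∧
          (∀ u v : V, G.Adj u v → ¬ H.Adj u v →
            ∃ C₁ ∈ 𝒞, ∃ C₂ ∈ 𝒞, C₁ ≠ C₂ ∧ u ∈ C₁ ∧ v ∈ C₂) ∧
          (∀ C ∈ 𝒞, ∀ u ∈ C, ∀ v ∈ C, H.edist u v ≤ 2) := by
  classical
  refine ⟨6, by norm_num, ?_⟩
  intro β hβ0 hβ1 V _ _ G
  set n := Fintype.card V with hn
  rcases Nat.eq_zero_or_pos n with hn0 | hn1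
  · have hVempty : IsEmpty V := Fintype.card_eq_zero_iff.mp hn0
    refine ⟨∅, ⊥, bot_le, by simp, by simp, ?_, ?_,
      fun u => isEmptyElim u, by simp⟩
    · rw [hn0]; push_cast
      simpa using Real.rpow_nonneg (le_refl (0:ℝ)) ((1:ℝ) - β)
    · simp only [SimpleGraph.edgeSet_bot, Set.ncard_empty, Nat.cast_zero]
      rw [hn0]; push_cast
      exact mul_nonneg (by norm_num) (Real.rpow_nonneg (le_refl (0:ℝ)) _)
  · -- main case: n ≥ 1
    have hnR : (1:ℝ) ≤ (n:ℝ) := by exact_mod_cast hn1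
    have hnpos : (0:ℝ) < (n:ℝ) := lt_of_lt_of_le one_pos hnR
    have hrpos : (0:ℝ) < (n:ℝ) ^ β := Real.rpow_pos_of_pos hnpos β
    have hr1 : (1:ℝ) ≤ (n:ℝ) ^ β := Real.one_le_rpow hnR hβ0
    set D : ℕ := ⌈(n:ℝ) ^ β⌉₊ with hD
    have hDpos : 1 ≤ D := Nat.one_le_ceil_iff.mpr hrpos
    have hDge : (n:ℝ) ^ β ≤ (D:ℕ) := Nat.le_ceil _
    have hDle : (D:ℝ) ≤ 2 * (n:ℝ) ^ β := by
      have h := Nat.ceil_lt_add_one (le_of_lt hrpos)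
      have : (D:ℝ) < (n:ℝ)^β + 1 := h
      linarith
    obtain ⟨𝒞, h1, h2, h3⟩ := greedy_clustering V G D hDpos Finset.univ
    have hVne : Nonempty V := Fintype.card_pos_iff.mp hn1
    have hcen : ∀ C ∈ 𝒞, ∃ v, ∀ u ∈ C, G.Adj v u := fun C hC => (h1 C hC).2.2
    choose! f hf using hcen
    set W : Finset V := 𝒞.biUnion id with hW
    set Uc : Finset V := Finset.univ \ W with hUc
    set r : V → V → Prop := fun a b => G.Adj a b ∧ (a ∈ Uc ∨ b ∈ Uc ∨
      (∃ C ∈ 𝒞, a ∈ C ∧ b ∈ C) ∨ (∃ C ∈ 𝒞, a = f C ∧ b ∈ C)) with hr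
    set H : SimpleGraph V := SimpleGraph.fromRel r with hH
    have hHG : H ≤ G := by
      intro a b hab
      rw [hH, SimpleGraph.fromRel_adj] at hab
      rcases hab.2 with h | h
      · exact h.1
      · exact h.1.symm
    -- cluster count
    have hWcard : W.card = 𝒞.card * D := by
      have hdisj : ∀ C ∈ 𝒞, ∀ C' ∈ 𝒞, C ≠ C' → Disjoint (id C) (id C') :=
        fun C hC C' hC' hne => h2 hC hC' hne
      rw [hW, Finset.card_biUnion hdisj]
      calc ∑ C ∈ 𝒞, (id C).card = ∑ _C ∈ 𝒞, D :=
            Finset.sum_congr rfl (fun C hC => (h1 C hC).1)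
        _ = 𝒞.card * D := by rw [Finset.sum_const, smul_eq_mul]
    have hqD : 𝒞.card * D ≤ n := by
      rw [← hWcard]
      exact le_trans (Finset.card_le_card (Finset.subset_univ W)) (le_of_eq rfl)
    have hqbound : (𝒞.card : ℝ) ≤ (n:ℝ) ^ ((1:ℝ) - β) := by
      have h1' : (𝒞.card : ℝ) * (n:ℝ)^β ≤ (n:ℝ) := by
        calc (𝒞.card : ℝ) * (n:ℝ)^β ≤ (𝒞.card : ℝ) * D :=
              mul_le_mul_of_nonneg_left hDge (Nat.cast_nonneg _)
          _ ≤ (n:ℝ) := by exact_mod_cast hqD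
      rw [Real.rpow_sub hnpos, Real.rpow_one, le_div_iff₀ hrpos]
      exact h1'
    -- edge counting
    set E1 : Finset (Sym2 V) := 𝒞.biUnion (fun C => (C ×ˢ C).image (fun p => s(p.1, p.2))) with hE1
    set E2 : Finset (Sym2 V) := 𝒞.biUnion (fun C => C.image (fun u => s(f C, u))) with hE2
    set E3 : Finset (Sym2 V) := ((Finset.univ ×ˢ Uc).filter
      (fun p => G.Adj p.1 p.2)).image (fun p => s(p.1, p.2)) with hE3
    have hrmem : ∀ a b : V, r a b → s(a, b) ∈ E1 ∪ E2 ∪ E3 := by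
      intro a b hab
      obtain ⟨hadj, hcase⟩ := hab
      rcases hcase with h | h | ⟨C, hC, haC, hbC⟩ | ⟨C, hC, hfa, hbC⟩
      · refine Finset.mem_union_right _ ?_
        rw [hE3]
        refine Finset.mem_image.mpr ⟨(b, a), ?_, Sym2.eq_swap⟩
        simp [Finset.mem_filter, Finset.mem_product, h, hadj.symm]
      · refine Finset.mem_union_right _ ?_
        rw [hE3]
        refine Finset.mem_image.mpr ⟨(a, b), ?_, rfl⟩
        simp [Finset.mem_filter, Finset.mem_product, h, hadj]
      · refine Finset.mem_union_left _ (Finset.mem_union_left _ ?_)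
        rw [hE1]
        exact Finset.mem_biUnion.mpr ⟨C, hC, Finset.mem_image.mpr
          ⟨(a, b), Finset.mem_product.mpr ⟨haC, hbC⟩, rfl⟩⟩
      · refine Finset.mem_union_left _ (Finset.mem_union_right _ ?_)
        rw [hE2]
        exact Finset.mem_biUnion.mpr ⟨C, hC, Finset.mem_image.mpr ⟨b, hbC, by rw [hfa]⟩⟩
    have hsub : H.edgeSet ⊆ ↑(E1 ∪ E2 ∪ E3) := by
      intro e he
      induction e with
      | h a b =>
        rw [SimpleGraph.mem_edgeSet, hH, SimpleGraph.fromRel_adj] at he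
        rcases he.2 with h | h
        · exact_mod_cast hrmem a b h
        · rw [Sym2.eq_swap]
          exact_mod_cast hrmem b a h
    have hncard : H.edgeSet.ncard ≤ (E1 ∪ E2 ∪ E3).card := by
      rw [← Set.ncard_coe_finset]
      exact Set.ncard_le_ncard hsub (Finset.finite_toSet _)
    have hE1card : E1.card ≤ 𝒞.card * (D * D) := by
      calc E1.card ≤ ∑ C ∈ 𝒞, ((C ×ˢ C).image (fun p => s(p.1, p.2))).card :=
            Finset.card_biUnion_le
        _ ≤ ∑ C ∈ 𝒞, D * D := by
            refine Finset.sum_le_sum (fun C hC => ?_)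
            calc ((C ×ˢ C).image (fun p => s(p.1, p.2))).card ≤ (C ×ˢ C).card :=
                  Finset.card_image_le
              _ = D * D := by rw [Finset.card_product, (h1 C hC).1]
        _ = 𝒞.card * (D * D) := by rw [Finset.sum_const, smul_eq_mul]
    have hE2card : E2.card ≤ 𝒞.card * D := by
      calc E2.card ≤ ∑ C ∈ 𝒞, (C.image (fun u => s(f C, u))).card :=
            Finset.card_biUnion_le
        _ ≤ ∑ C ∈ 𝒞, D := by
            refine Finset.sum_le_sum (fun C hC => ?_)
            calc (C.image (fun u => s(f C, u))).card ≤ C.card := Finset.card_image_le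
              _ = D := (h1 C hC).1
        _ = 𝒞.card * D := by rw [Finset.sum_const, smul_eq_mul]
    have hE3card : E3.card ≤ n * D := by
      have hfilt : ((Finset.univ ×ˢ Uc).filter (fun p => G.Adj p.1 p.2)) ⊆
          Finset.univ.biUnion (fun a => (Uc.filter (fun b => G.Adj a b)).image (Prod.mk a)) := by
        rintro ⟨a, b⟩ hp
        rw [Finset.mem_filter, Finset.mem_product] at hp
        obtain ⟨⟨-, hb⟩, hadj⟩ := hp
        exact Finset.mem_biUnion.mpr ⟨a, Finset.mem_univ a,
          Finset.mem_image.mpr ⟨b, Finset.mem_filter.mpr ⟨hb, hadj⟩, rfl⟩⟩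
      calc E3.card ≤ ((Finset.univ ×ˢ Uc).filter (fun p => G.Adj p.1 p.2)).card :=
            Finset.card_image_le
        _ ≤ ∑ a : V, ((Uc.filter (fun b => G.Adj a b)).image (Prod.mk a)).card :=
            le_trans (Finset.card_le_card hfilt) Finset.card_biUnion_le
        _ ≤ ∑ _a : V, D := by
            refine Finset.sum_le_sum (fun a _ => ?_)
            calc ((Uc.filter (fun b => G.Adj a b)).image (Prod.mk a)).card
                ≤ (Uc.filter (fun b => G.Adj a b)).card := Finset.card_image_le
              _ ≤ D := le_of_lt (h3 a)
        _ = n * D := by rw [Finset.sum_const, smul_eq_mul, Finset.card_univ]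
    have hEcard : ((E1 ∪ E2 ∪ E3).card : ℝ) ≤ 3 * n * D := by
      have h1n : E1.card ≤ n * D := le_trans hE1card (by
        calc 𝒞.card * (D * D) = (𝒞.card * D) * D := by ring
          _ ≤ n * D := Nat.mul_le_mul_right D hqD)
      have h2n : E2.card ≤ n * D :=
        le_trans hE2card (le_trans hqD (Nat.le_mul_of_pos_right n hDpos))
      have : (E1 ∪ E2 ∪ E3).card ≤ n * D + n * D + n * D := by
        calc (E1 ∪ E2 ∪ E3).card ≤ (E1 ∪ E2).card + E3.card := Finset.card_union_le _ _
          _ ≤ E1.card + E2.card + E3.card :=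
              Nat.add_le_add_right (Finset.card_union_le _ _) _
          _ ≤ n * D + n * D + n * D := by omega
      calc ((E1 ∪ E2 ∪ E3).card : ℝ) ≤ ((n * D + n * D + n * D : ℕ) : ℝ) := by
            exact_mod_cast this
        _ = 3 * n * D := by push_cast; ring
    have hedge : (H.edgeSet.ncard : ℝ) ≤ 6 * (n:ℝ) ^ ((1:ℝ) + β) := by
      have : (H.edgeSet.ncard : ℝ) ≤ 3 * n * D := le_trans (by exact_mod_cast hncard) hEcard
      calc (H.edgeSet.ncard : ℝ) ≤ 3 * n * D := this
        _ ≤ 3 * n * (2 * (n:ℝ)^β) := by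
            refine mul_le_mul_of_nonneg_left hDle (by positivity)
        _ = 6 * ((n:ℝ) * (n:ℝ)^β) := by ring
        _ = 6 * (n:ℝ) ^ ((1:ℝ) + β) := by
            rw [Real.rpow_add hnpos, Real.rpow_one]
    refine ⟨𝒞, H, hHG, ?_, h2, hqbound, hedge, ?_, ?_⟩
    · intro C hC
      rw [← Finset.card_pos, (h1 C hC).1]
      omega
    · -- missing edge property
      intro u v hG hnH
      rw [hH, SimpleGraph.fromRel_adj] at hnH
      push_neg at hnH
      obtain ⟨hnruv, -⟩ := hnH hG.ne
      simp only [hr] at hnruv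
      push_neg at hnruv
      obtain ⟨h4a, h4b, h4c, -⟩ := hnruv hG
      have huW : u ∈ W := by
        by_contra h'
        exact h4a (Finset.mem_sdiff.mpr ⟨Finset.mem_univ u, h'⟩)
      have hvW : v ∈ W := by
        by_contra h'
        exact h4b (Finset.mem_sdiff.mpr ⟨Finset.mem_univ v, h'⟩)
      obtain ⟨C₁, hC₁, huC₁⟩ := Finset.mem_biUnion.mp huW
      obtain ⟨C₂, hC₂, hvC₂⟩ := Finset.mem_biUnion.mp hvW
      refine ⟨C₁, hC₁, C₂, hC₂, ?_, huC₁, hvC₂⟩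
      rintro rfl
      exact h4c C₁ hC₁ huC₁ hvC₂
    · -- diameter
      intro C hC u hu v hv
      by_cases huv : u = v
      · subst huv; simp [SimpleGraph.edist_self]
      · have hadj : ∀ w ∈ C, w ≠ f C → H.Adj (f C) w := by
          intro w hw hwne
          rw [hH, SimpleGraph.fromRel_adj]
          exact ⟨Ne.symm hwne, Or.inl ⟨hf C hC w hw, Or.inr (Or.inr (Or.inr ⟨C, hC, rfl, hw⟩))⟩⟩
        by_cases huf : u = f C
        · have : H.Adj u v := by rw [huf]; exact hadj v hv (by rw [← huf]; exact Ne.symm huv)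
          calc H.edist u v ≤ 1 := le_of_eq (SimpleGraph.edist_eq_one_iff_adj.mpr this)
            _ ≤ 2 := by norm_num
        · by_cases hvf : v = f C
          · have : H.Adj u v := by
              have := hadj u hu huf
              rw [hvf]; exact this.symm
            calc H.edist u v ≤ 1 := le_of_eq (SimpleGraph.edist_eq_one_iff_adj.mpr this)
              _ ≤ 2 := by norm_num
          · have h1' : H.Adj (f C) u := hadj u hu huf
            have h2' : H.Adj (f C) v := hadj v hv hvf
            calc H.edist u v ≤ H.edist u (f C) + H.edist (f C) v :=
                  SimpleGraph.edist_triangle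
              _ ≤ 1 + 1 := by
                  refine add_le_add ?_ ?_
                  · exact le_of_eq (SimpleGraph.edist_eq_one_iff_adj.mpr h1'.symm)
                  · exact le_of_eq (SimpleGraph.edist_eq_one_iff_adj.mpr h2')
              _ = 2 := by norm_num
end

section
/- Let G = (V, E) be a finite simple undirected unweighted graph, let 𝒞 be a collection of pairwise disjoint subsets of V, and let H be a spanning subgraph of G satisfying the missing-edge property (every edge of G absent from H has its two endpoints in two different clusters of 𝒞) and the cluster-diameter property (any two vertices in the same cluster of 𝒞 are at distance at most 2 in H). Let ρ be a shortest path in G between two vertices u and v, and suppose ρ contains exactly t edges that are not edges of H. Then the number of clusters of 𝒞 that contain at least one vertex of ρ is at least t/2. -/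
open SimpleGraph

private lemma walk_mem_edges_getVert {V : Type} {G : SimpleGraph V} {u v : V}
    (p : G.Walk u v) {e : Sym2 V} (he : e ∈ p.edges) :
    ∃ i, i < p.length ∧ e = s(p.getVert i, p.getVert (i + 1)) := by
  induction p with
  | nil => simp at he
  | cons h q ih =>
    rw [Walk.edges_cons, List.mem_cons] at he
    rcases he with he | he
    · exact ⟨0, by simp, by simpa [Walk.getVert_cons_succ] using he⟩
    · obtain ⟨i, hi, hei⟩ := ih he
      exact ⟨i + 1, by simpa using hi, by simpa [Walk.getVert_cons_succ] using hei⟩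

private lemma walk_exists_take {V : Type} {G : SimpleGraph V} {u v : V}
    (p : G.Walk u v) : ∀ i, i ≤ p.length → ∃ q : G.Walk u (p.getVert i), q.length = i := by
  induction p with
  | nil =>
    intro i hi
    simp only [Walk.length_nil, Nat.le_zero] at hi
    subst hi
    exact ⟨Walk.nil, rfl⟩
  | @cons a b c h q ih =>
    intro i hi
    cases i with
    | zero => exact ⟨(Walk.nil).copy rfl (Walk.getVert_zero _).symm, by simp⟩
    | succ j =>
      simp only [Walk.length_cons, Nat.succ_le_succ_iff] at hi
      obtain ⟨r, hr⟩ := ih j hi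
      exact ⟨(r.cons h).copy rfl (Walk.getVert_cons_succ _ _).symm, by simp [hr]⟩

private lemma walk_exists_drop {V : Type} {G : SimpleGraph V} {u v : V}
    (p : G.Walk u v) : ∀ i, i ≤ p.length →
      ∃ q : G.Walk (p.getVert i) v, q.length = p.length - i := by
  induction p with
  | nil =>
    intro i hi
    simp only [Walk.length_nil, Nat.le_zero] at hi
    subst hi
    exact ⟨Walk.nil, rfl⟩
  | @cons a b c h q ih =>
    intro i hi
    cases i with
    | zero => exact ⟨(q.cons h).copy (Walk.getVert_zero _).symm rfl, by simp⟩
    | succ j =>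
      simp only [Walk.length_cons, Nat.succ_le_succ_iff] at hi
      obtain ⟨r, hr⟩ := ih j hi
      exact ⟨r.copy (Walk.getVert_cons_succ _ _).symm rfl, by simp [hr]⟩

/-- On a shortest path, vertices at `G`-edistance at most 2 occupy positions at most 2 apart. -/
private lemma shortest_path_getVert_close {V : Type} {G : SimpleGraph V} {u v : V}
    (p : G.Walk u v) (hshort : p.length = G.dist u v) {i j : ℕ}
    (hij : i ≤ j) (hj : j ≤ p.length)
    (hd : G.edist (p.getVert i) (p.getVert j) ≤ 2) : j ≤ i + 2 := by
  obtain ⟨q1, hq1⟩ := walk_exists_take p i (hij.trans hj)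
  obtain ⟨q2, hq2⟩ := walk_exists_drop p j hj
  obtain ⟨d, hdd⟩ : ∃ d, p.length - j = d := ⟨_, rfl⟩
  have h1 : G.edist u (p.getVert i) ≤ (i : ℕ∞) := by
    have := q1.edist_le; rwa [hq1] at this
  have h2 : G.edist (p.getVert j) v ≤ (d : ℕ∞) := by
    have := q2.edist_le; rwa [hq2, hdd] at this
  have hfin : G.edist u v ≠ ⊤ := by
    intro htop
    have := p.edist_le
    rw [htop] at this
    exact (ENat.coe_ne_top p.length) (top_le_iff.mp this)
  have hda : (G.dist u v : ℕ∞) = G.edist u v := ENat.coe_toNat hfin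
  have htri : G.edist u v ≤ G.edist u (p.getVert i) + G.edist (p.getVert i) (p.getVert j)
      + G.edist (p.getVert j) v :=
    le_trans (SimpleGraph.edist_triangle (v := p.getVert j))
      (add_le_add_left (SimpleGraph.edist_triangle (v := p.getVert i)) _)
  have hkey : ((p.length : ℕ) : ℕ∞) ≤ ((i + 2 + d : ℕ) : ℕ∞) := by
    rw [hshort, hda]
    refine htri.trans ?_
    have hcast : ((i + 2 + d : ℕ) : ℕ∞) = (i : ℕ∞) + 2 + (d : ℕ∞) := by push_cast; ring
    rw [hcast]
    exact add_le_add (add_le_add h1 hd) h2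
  rw [Nat.cast_le] at hkey
  omega

/-- **Cluster-counting lemma** (Lemma 2 of the paper).
If `H ≤ G` and the clustering `𝒞` satisfy the missing-edge and cluster-diameter
properties, and a shortest path `ρ` in `G` between `u` and `v` contains exactly
`t` edges absent from `H`, then at least `t/2` clusters of `𝒞` contain a vertex
of `ρ`. -/
theorem clusters_on_shortest_path
    (V : Type) [Fintype V] [DecidableEq V]
    (G H : SimpleGraph V) (hHG : H ≤ G)
    (𝒞 : Finset (Finset V))
    (hdisj : (𝒞 : Set (Finset V)).Pairwise fun C₁ C₂ => Disjoint C₁ C₂)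
    (hmiss : ∀ u v : V, G.Adj u v → ¬ H.Adj u v →
      ∃ C₁ ∈ 𝒞, ∃ C₂ ∈ 𝒞, C₁ ≠ C₂ ∧ u ∈ C₁ ∧ v ∈ C₂)
    (hdiam : ∀ C ∈ 𝒞, ∀ u ∈ C, ∀ v ∈ C, H.edist u v ≤ 2)
    (u v : V) (ρ : G.Walk u v) (hpath : ρ.IsPath) (hshort : ρ.length = G.dist u v)
    (t : ℕ) (ht : {e | e ∈ ρ.edges ∧ e ∉ H.edgeSet}.ncard = t) :
    (t : ℝ) / 2 ≤
      ({C | C ∈ 𝒞 ∧ ∃ x ∈ C, x ∈ ρ.support} : Set (Finset V)).ncard := by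
  classical
  set M : Finset (Sym2 V) := ρ.edges.toFinset.filter (fun e => e ∉ H.edgeSet) with hM
  set S : Finset (Finset V) := 𝒞.filter (fun C => ∃ x ∈ C, x ∈ ρ.support) with hS
  have hMt : M.card = t := by
    rw [← ht]
    have : {e | e ∈ ρ.edges ∧ e ∉ H.edgeSet} = (M : Set (Sym2 V)) := by
      ext e; simp [hM]
    rw [this, Set.ncard_coe_finset]
  have hSe : ({C | C ∈ 𝒞 ∧ ∃ x ∈ C, x ∈ ρ.support} : Set (Finset V)) = (S : Set (Finset V)) := by
    ext C; simp [hS]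
  rw [hSe, Set.ncard_coe_finset]
  -- reduce to `t ≤ 2 * S.card`
  suffices h : t ≤ 2 * S.card by
    rw [div_le_iff₀ (by norm_num : (0:ℝ) < 2)]
    have h' : (t : ℝ) ≤ ((2 * S.card : ℕ) : ℝ) := Nat.cast_le.mpr h
    push_cast at h'
    linarith
  -- each missing edge is covered by at least two clusters of S
  have hlow : ∀ e ∈ M, 2 ≤ (S.filter (fun C => ∃ x ∈ C, x ∈ e)).card := by
    intro e he
    simp only [hM, Finset.mem_filter, List.mem_toFinset] at he
    obtain ⟨heρ, heH⟩ := he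
    induction e using Sym2.inductionOn with
    | hf x y =>
      have hadj : G.Adj x y := ρ.adj_of_mem_edges heρ
      have hnH : ¬ H.Adj x y := fun h => heH (H.mem_edgeSet.mpr h)
      obtain ⟨C₁, hC₁, C₂, hC₂, hne, hx, hy⟩ := hmiss x y hadj hnH
      have hxs : x ∈ ρ.support := ρ.fst_mem_support_of_mem_edges heρ
      have hys : y ∈ ρ.support := ρ.snd_mem_support_of_mem_edges heρ
      have hsub : ({C₁, C₂} : Finset (Finset V)) ⊆
          S.filter (fun C => ∃ z ∈ C, z ∈ s(x, y)) := by
        intro C hC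
        simp only [Finset.mem_insert, Finset.mem_singleton] at hC
        rcases hC with rfl | rfl
        · exact Finset.mem_filter.mpr ⟨Finset.mem_filter.mpr ⟨hC₁, x, hx, hxs⟩,
            x, hx, by simp⟩
        · exact Finset.mem_filter.mpr ⟨Finset.mem_filter.mpr ⟨hC₂, y, hy, hys⟩,
            y, hy, by simp⟩
      calc 2 = ({C₁, C₂} : Finset (Finset V)).card := (Finset.card_pair hne).symm
        _ ≤ _ := Finset.card_le_card hsub
  -- each cluster of S covers at most 4 missing edges
  have hhigh : ∀ C ∈ S, (M.filter (fun e => ∃ x ∈ C, x ∈ e)).card ≤ 4 := by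
    intro C hCS
    have hC𝒞 : C ∈ 𝒞 := (Finset.mem_filter.mp hCS).1
    set P : Finset ℕ := (Finset.range (ρ.length + 1)).filter (fun i => ρ.getVert i ∈ C) with hP
    set F : Finset (Sym2 V) := M.filter (fun e => ∃ x ∈ C, x ∈ e) with hF
    rcases Finset.eq_empty_or_nonempty F with hFe | hFne
    · simp [hFe]
    -- P is nonempty
    have hPne : P.Nonempty := by
      obtain ⟨C', hx⟩ := Finset.mem_filter.mp hCS
      obtain ⟨x, hxC, hxs⟩ := hx
      obtain ⟨m, hm, hmle⟩ := Walk.mem_support_iff_exists_getVert.mp hxs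
      exact ⟨m, Finset.mem_filter.mpr ⟨Finset.mem_range.mpr (by omega), hm ▸ hxC⟩⟩
    set p₀ : ℕ := P.min' hPne with hp₀
    -- all positions in P are within [p₀, p₀+2]
    have hPbound : ∀ m ∈ P, m ≤ p₀ + 2 := by
      intro m hm
      have hp₀P : p₀ ∈ P := P.min'_mem hPne
      have hle : p₀ ≤ m := P.min'_le m hm
      simp only [hP, Finset.mem_filter, Finset.mem_range] at hm hp₀P
      have hd : G.edist (ρ.getVert p₀) (ρ.getVert m) ≤ 2 :=
        le_trans (edist_anti hHG) (hdiam C hC𝒞 _ hp₀P.2 _ hm.2)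
      exact shortest_path_getVert_close ρ hshort hle (by omega) hd
    -- each edge of F has an index
    have key : ∀ e ∈ F, ∃ i, i < ρ.length ∧ e = s(ρ.getVert i, ρ.getVert (i + 1)) := by
      intro e he
      have : e ∈ ρ.edges := by
        simp only [hF, hM, Finset.mem_filter, List.mem_toFinset] at he
        exact he.1.1
      exact walk_mem_edges_getVert ρ this
    choose! idx hidx1 hidx2 using key
    have hcard : F.card ≤ (Finset.Icc (p₀ - 1) (p₀ + 2)).card := by
      apply Finset.card_le_card_of_injOn idx
      · intro e he
        have hi := hidx1 e he
        have hei := hidx2 e he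
        obtain ⟨x, hxC, hxe⟩ := (Finset.mem_filter.mp he).2
        rw [hei, Sym2.mem_iff] at hxe
        rw [Finset.mem_coe, Finset.mem_Icc]
        rcases hxe with rfl | rfl
        · have : idx e ∈ P := Finset.mem_filter.mpr
            ⟨Finset.mem_range.mpr (by omega), hxC⟩
          have h1 := P.min'_le _ this
          have h2 := hPbound _ this
          omega
        · have : idx e + 1 ∈ P := Finset.mem_filter.mpr
            ⟨Finset.mem_range.mpr (by omega), hxC⟩
          have h1 := P.min'_le _ this
          have h2 := hPbound _ this
          omega
      · intro e he e' he' heq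
        rw [hidx2 e he, hidx2 e' he', heq]
    have : (Finset.Icc (p₀ - 1) (p₀ + 2)).card ≤ 4 := by
      rw [Nat.card_Icc]
      omega
    exact le_trans hcard this
  -- double counting
  have hdouble : (∑ e ∈ M, (S.filter (fun C => ∃ x ∈ C, x ∈ e)).card)
      = ∑ C ∈ S, (M.filter (fun e => ∃ x ∈ C, x ∈ e)).card := by
    simp_rw [Finset.card_filter]
    rw [Finset.sum_comm]
  have h2t : 2 * M.card ≤ ∑ C ∈ S, (M.filter (fun e => ∃ x ∈ C, x ∈ e)).card := by
    rw [← hdouble]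
    calc 2 * M.card = ∑ _e ∈ M, 2 := by rw [Finset.sum_const, smul_eq_mul, mul_comm]
      _ ≤ _ := Finset.sum_le_sum hlow
  have h4S : (∑ C ∈ S, (M.filter (fun e => ∃ x ∈ C, x ∈ e)).card) ≤ 4 * S.card := by
    calc (∑ C ∈ S, (M.filter (fun e => ∃ x ∈ C, x ∈ e)).card)
        ≤ ∑ _C ∈ S, 4 := Finset.sum_le_sum hhigh
      _ = 4 * S.card := by rw [Finset.sum_const, smul_eq_mul, mul_comm]
  omega
end

section
/- Let G = (V, E) be a finite simple undirected unweighted graph, let H be a spanning subgraph of G, and let C ⊆ V be a nonempty set of vertices such that any two vertices of C are at distance at most 2 in H. Let u, v ∈ V be in the same connected component of G, and suppose some shortest u–v path in G contains at least one vertex of C. If δ_H(u, C) = δ_G(u, C) and δ_H(v, C) = δ_G(v, C), where δ(x, C) denotes the minimum distance from x to a vertex of C, then δ_H(u, v) ≤ δ_G(u, v) + 2. -/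
/-- If a nonempty set `C` has `H`-diameter at most `2`, some shortest `u`–`v`
path in `G` meets `C`, and the distances from `u` and from `v` to `C` are the
same in the spanning subgraph `H` as in `G`, then
`δ_H(u,v) ≤ δ_G(u,v) + 2`. -/
theorem distance_via_cluster
    (V : Type) [Fintype V] (G H : SimpleGraph V) (hHG : H ≤ G)
    (C : Set V) (hne : C.Nonempty)
    (hC : ∀ x ∈ C, ∀ y ∈ C, H.edist x y ≤ 2)
    (u v : V) (hreach : G.Reachable u v)
    (ρ : G.Walk u v) (hpath : ρ.IsPath) (hshort : ρ.length = G.dist u v)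
    (hmeet : ∃ x ∈ C, x ∈ ρ.support)
    (hu : (⨅ y ∈ C, H.edist u y) = ⨅ y ∈ C, G.edist u y)
    (hv : (⨅ y ∈ C, H.edist v y) = ⨅ y ∈ C, G.edist v y) :
    H.edist u v ≤ G.edist u v + 2 := by
  classical
  obtain ⟨x, hxC, hxs⟩ := hmeet
  -- choose H-minimizers y (for u) and z (for v) in C
  obtain ⟨y, hyC, hymin⟩ := Set.exists_min_image C (fun w => H.edist u w)
    (Set.toFinite C) hne
  obtain ⟨z, hzC, hzmin⟩ := Set.exists_min_image C (fun w => H.edist v w)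
    (Set.toFinite C) hne
  have hyle : H.edist u y ≤ G.edist u x := by
    calc H.edist u y ≤ ⨅ w ∈ C, H.edist u w := le_iInf₂ fun w hw => hymin w hw
    _ = ⨅ w ∈ C, G.edist u w := hu
    _ ≤ G.edist u x := iInf₂_le x hxC
  have hzle : H.edist v z ≤ G.edist v x := by
    calc H.edist v z ≤ ⨅ w ∈ C, H.edist v w := le_iInf₂ fun w hw => hzmin w hw
    _ = ⨅ w ∈ C, G.edist v w := hv
    _ ≤ G.edist v x := iInf₂_le x hxC
  -- splitting the shortest path at x
  have hsplit : G.edist u x + G.edist x v ≤ (ρ.length : ℕ∞) := by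
    have h1 : G.edist u x ≤ ((ρ.takeUntil x hxs).length : ℕ∞) :=
      SimpleGraph.edist_le _
    have h2 : G.edist x v ≤ ((ρ.dropUntil x hxs).length : ℕ∞) :=
      SimpleGraph.edist_le _
    have hlen : (ρ.takeUntil x hxs).length + (ρ.dropUntil x hxs).length
        = ρ.length := by
      rw [← SimpleGraph.Walk.length_append, SimpleGraph.Walk.take_spec]
    calc G.edist u x + G.edist x v
        ≤ ((ρ.takeUntil x hxs).length : ℕ∞) + ((ρ.dropUntil x hxs).length : ℕ∞) :=
          add_le_add h1 h2
      _ = (ρ.length : ℕ∞) := by exact_mod_cast congrArg Nat.cast hlen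
  have hlen_le : (ρ.length : ℕ∞) ≤ G.edist u v := by
    rw [hshort]
    exact_mod_cast ENat.coe_toNat_le_self (G.edist u v)
  have hyz : H.edist y z ≤ 2 := hC y hyC z hzC
  calc H.edist u v ≤ H.edist u y + H.edist y v := H.edist_triangle
    _ ≤ H.edist u y + (H.edist y z + H.edist z v) :=
        add_le_add_right H.edist_triangle _
    _ = H.edist u y + H.edist z v + H.edist y z := by ring
    _ ≤ G.edist u x + G.edist v x + 2 :=
        add_le_add (add_le_add hyle (SimpleGraph.edist_comm ▸ hzle)) hyz
    _ = G.edist u x + G.edist x v + 2 := by rw [SimpleGraph.edist_comm (u := v)]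
    _ ≤ (ρ.length : ℕ∞) + 2 := add_le_add_left hsplit 2
    _ ≤ G.edist u v + 2 := add_le_add_left hlen_le 2
end

section
/- Let G = (V, E) be a finite simple undirected unweighted graph, let 𝒞 be a collection of pairwise disjoint subsets of V, and let H be a spanning subgraph of G satisfying the missing-edge property (every edge of G absent from H has its two endpoints in two different clusters of 𝒞) and the cluster-diameter property (any two vertices in the same cluster of 𝒞 are at distance at most 2 in H). Let ρ be a shortest path in G and let C ∈ 𝒞 be a cluster. Then the number of pairs (u, e), where e is an edge of ρ that is not an edge of H and u is an endpoint of e belonging to C, is at most 4. -/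
private lemma walk_edges_index {V : Type} {G : SimpleGraph V} :
    ∀ {u v : V} (p : G.Walk u v) (e : Sym2 V), e ∈ p.edges →
      ∃ k, k < p.length ∧ e = s(p.getVert k, p.getVert (k + 1))
  | _, _, .nil, e, h => by simp at h
  | _, _, .cons h q, e, he => by
    rw [SimpleGraph.Walk.edges_cons, List.mem_cons] at he
    cases he with
    | inl h' =>
      refine ⟨0, by simp, ?_⟩
      simpa [SimpleGraph.Walk.getVert_zero, SimpleGraph.Walk.getVert_cons_succ] using h'
    | inr h' =>
      obtain ⟨k, hk, hke⟩ := walk_edges_index q e h'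
      refine ⟨k + 1, by simpa using hk, ?_⟩
      simpa [SimpleGraph.Walk.getVert_cons_succ] using hke

private lemma edist_getVert_le' {V : Type} {G : SimpleGraph V} {u v : V} (p : G.Walk u v)
    {i j : ℕ} (h : i ≤ j) : G.edist (p.getVert i) (p.getVert j) ≤ ((j - i : ℕ) : ℕ∞) := by
  induction j, h using Nat.le_induction with
  | base => simp [SimpleGraph.edist_self]
  | succ j hij ih =>
    have h1 : G.edist (p.getVert j) (p.getVert (j + 1)) ≤ 1 := by
      by_cases hj : j < p.length
      · have hadj := p.adj_getVert_succ hj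
        calc G.edist _ _ ≤ (hadj.toWalk.length : ℕ∞) := SimpleGraph.edist_le _
          _ ≤ 1 := by simp [SimpleGraph.Adj.toWalk]
      · rw [p.getVert_of_length_le (le_of_not_gt hj),
          p.getVert_of_length_le (by omega)]
        simp [SimpleGraph.edist_self]
    calc G.edist (p.getVert i) (p.getVert (j + 1))
        ≤ G.edist (p.getVert i) (p.getVert j) + G.edist (p.getVert j) (p.getVert (j + 1)) :=
          SimpleGraph.edist_triangle
      _ ≤ ((j - i : ℕ) : ℕ∞) + 1 := add_le_add ih h1
      _ = ((j + 1 - i : ℕ) : ℕ∞) := by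
          rw [← Nat.cast_one, ← Nat.cast_add]; congr 1; omega

/-- Under the missing-edge and cluster-diameter properties, for any shortest path
`ρ` in `G` and any cluster `C ∈ 𝒞`, the number of pairs `(u, e)` where `e` is an
edge of `ρ` absent from `H` and `u ∈ C` is an endpoint of `e` is at most `4`. -/
theorem cluster_owns_few_pairs
    (V : Type) [Fintype V] [DecidableEq V]
    (G H : SimpleGraph V) (hHG : H ≤ G)
    (𝒞 : Finset (Finset V))
    (hdisj : (𝒞 : Set (Finset V)).Pairwise fun C₁ C₂ => Disjoint C₁ C₂)
    (hmiss : ∀ u v : V, G.Adj u v → ¬ H.Adj u v →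
      ∃ C₁ ∈ 𝒞, ∃ C₂ ∈ 𝒞, C₁ ≠ C₂ ∧ u ∈ C₁ ∧ v ∈ C₂)
    (hdiam : ∀ C ∈ 𝒞, ∀ u ∈ C, ∀ v ∈ C, H.edist u v ≤ 2)
    (u v : V) (ρ : G.Walk u v) (hpath : ρ.IsPath) (hshort : ρ.length = G.dist u v)
    (C : Finset V) (hc : C ∈ 𝒞) :
    ({p : V × Sym2 V |
        p.1 ∈ C ∧ p.2 ∈ ρ.edges ∧ p.2 ∉ H.edgeSet ∧ p.1 ∈ p.2} :
      Set (V × Sym2 V)).ncard ≤ 4 := by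
  classical
  set S : Set (V × Sym2 V) :=
    {p : V × Sym2 V | p.1 ∈ C ∧ p.2 ∈ ρ.edges ∧ p.2 ∉ H.edgeSet ∧ p.1 ∈ p.2} with hSdef
  rcases S.eq_empty_or_nonempty with hE | hne
  · rw [hE]; simp
  -- the length of ρ equals the extended distance
  have hreach : G.Reachable u v := ⟨ρ⟩
  have hlenE : (ρ.length : ℕ∞) = G.edist u v := by
    refine le_antisymm ?_ (SimpleGraph.edist_le ρ)
    obtain ⟨q, hq⟩ := hreach.exists_walk_length_eq_edist
    rw [← hq]
    exact_mod_cast (hshort ▸ SimpleGraph.dist_le q : ρ.length ≤ q.length)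
  -- window lemma: C-vertices on ρ are within 2 positions of each other
  have hwin : ∀ i j : ℕ, i ≤ j → j ≤ ρ.length →
      ρ.getVert i ∈ C → ρ.getVert j ∈ C → j ≤ i + 2 := by
    intro i j hij hjlen hiC hjC
    have hd : G.edist (ρ.getVert i) (ρ.getVert j) ≤ 2 :=
      le_trans (SimpleGraph.edist_anti hHG) (hdiam C hc _ hiC _ hjC)
    have h1 : G.edist u (ρ.getVert i) ≤ ((i : ℕ) : ℕ∞) := by
      have := edist_getVert_le' ρ (Nat.zero_le i)
      simpa using this
    have h2 : G.edist (ρ.getVert j) v ≤ ((ρ.length - j : ℕ) : ℕ∞) := by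
      have := edist_getVert_le' ρ hjlen
      simpa [ρ.getVert_length] using this
    have tri : (ρ.length : ℕ∞) ≤ ((i : ℕ) : ℕ∞) + 2 + ((ρ.length - j : ℕ) : ℕ∞) := by
      calc (ρ.length : ℕ∞) = G.edist u v := hlenE
        _ ≤ G.edist u (ρ.getVert i) + G.edist (ρ.getVert i) v :=
            SimpleGraph.edist_triangle
        _ ≤ G.edist u (ρ.getVert i) + (G.edist (ρ.getVert i) (ρ.getVert j)
            + G.edist (ρ.getVert j) v) := add_le_add_right SimpleGraph.edist_triangle _
        _ = G.edist u (ρ.getVert i) + G.edist (ρ.getVert i) (ρ.getVert j)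
            + G.edist (ρ.getVert j) v := (add_assoc _ _ _).symm
        _ ≤ ((i : ℕ) : ℕ∞) + 2 + ((ρ.length - j : ℕ) : ℕ∞) :=
            add_le_add (add_le_add h1 hd) h2
    have tri' : (ρ.length : ℕ∞) ≤ ((i + 2 + (ρ.length - j) : ℕ) : ℕ∞) := by
      refine le_trans tri (le_of_eq ?_)
      push_cast
      ring
    have := Nat.cast_le.mp tri'
    omega
  -- the index function
  set F : V × Sym2 V → ℕ := fun p =>
    if h : ∃ k, k < ρ.length ∧ p.2 = s(ρ.getVert k, ρ.getVert (k + 1)) then h.choose else 0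
    with hFdef
  have hFspec : ∀ p : V × Sym2 V, p ∈ S →
      F p < ρ.length ∧ p.2 = s(ρ.getVert (F p), ρ.getVert (F p + 1)) := by
    intro p hp
    have h : ∃ k, k < ρ.length ∧ p.2 = s(ρ.getVert k, ρ.getVert (k + 1)) :=
      walk_edges_index ρ p.2 hp.2.1
    simp only [hFdef, dif_pos h]
    exact ⟨h.choose_spec.1, h.choose_spec.2⟩
  -- no missing edge has both endpoints in C
  have hnotboth : ∀ a b : V, a ∈ C → b ∈ C → s(a, b) ∈ ρ.edges → s(a, b) ∉ H.edgeSet → False := by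
    intro a b haC hbC hab habH
    have hadj : G.Adj a b := ρ.adj_of_mem_edges hab
    have hnadj : ¬ H.Adj a b := by simpa [SimpleGraph.mem_edgeSet] using habH
    obtain ⟨C₁, hC₁, C₂, hC₂, hne12, haC₁, hbC₂⟩ := hmiss a b hadj hnadj
    have e1 : C₁ = C := by
      by_contra hne
      exact (Finset.disjoint_left.mp (hdisj hC₁ hc hne) haC₁) haC
    have e2 : C₂ = C := by
      by_contra hne
      exact (Finset.disjoint_left.mp (hdisj hC₂ hc hne) hbC₂) hbC
    exact hne12 (e1.trans e2.symm)
  -- F is injective on S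
  have hinj : Set.InjOn F S := by
    intro p₁ hp₁ p₂ hp₂ hF
    obtain ⟨_, he₁⟩ := hFspec p₁ hp₁
    obtain ⟨_, he₂⟩ := hFspec p₂ hp₂
    have heq : p₁.2 = p₂.2 := by rw [he₁, he₂, hF]
    have h1 : p₁.1 = p₂.1 := by
      by_contra hne
      have hmem : p₁.1 ∈ p₁.2 ∧ p₂.1 ∈ p₁.2 := ⟨hp₁.2.2.2, heq ▸ hp₂.2.2.2⟩
      have : p₁.2 = s(p₁.1, p₂.1) := (Sym2.mem_and_mem_iff hne).mp hmem
      exact hnotboth p₁.1 p₂.1 hp₁.1 hp₂.1 (this ▸ hp₁.2.1) (this ▸ hp₁.2.2.1)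
    exact Prod.ext h1 heq
  -- the set of C-positions adjacent to chosen indices
  have hCpos : ∀ p ∈ S, ∃ q, (q = F p ∨ q = F p + 1) ∧ ρ.getVert q ∈ C := by
    intro p hp
    obtain ⟨_, he⟩ := hFspec p hp
    have : p.1 ∈ p.2 := hp.2.2.2
    rw [he, Sym2.mem_iff] at this
    rcases this with h | h
    · exact ⟨F p, Or.inl rfl, h ▸ hp.1⟩
    · exact ⟨F p + 1, Or.inr rfl, h ▸ hp.1⟩
  set Q : Set ℕ := {q | ρ.getVert q ∈ C ∧ ∃ p ∈ S, q = F p ∨ q = F p + 1} with hQdef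
  have hQne : Q.Nonempty := by
    obtain ⟨p₀, hp₀⟩ := hne
    obtain ⟨q, hq, hqC⟩ := hCpos p₀ hp₀
    exact ⟨q, hqC, p₀, hp₀, hq⟩
  have hQle : ∀ q ∈ Q, q ≤ ρ.length := by
    rintro q ⟨-, p, hp, hq | hq⟩
    · exact hq ▸ (hFspec p hp).1.le
    · exact hq ▸ (hFspec p hp).1
  set m : ℕ := sInf Q with hmdef
  have hmQ : m ∈ Q := Nat.sInf_mem hQne
  -- image of S under F lies in a 4-element interval
  have himg : F '' S ⊆ ↑(Finset.Icc (m - 1) (m + 2)) := by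
    rintro k ⟨p, hp, rfl⟩
    obtain ⟨q, hq, hqC⟩ := hCpos p hp
    have hqQ : q ∈ Q := ⟨hqC, p, hp, hq⟩
    have hmq : m ≤ q := Nat.sInf_le hqQ
    have hq2 : q ≤ m + 2 := hwin m q hmq (hQle q hqQ) hmQ.1 hqC
    simp only [Finset.coe_Icc, Set.mem_Icc]
    omega
  calc S.ncard = (F '' S).ncard := (Set.ncard_image_of_injOn hinj).symm
    _ ≤ (↑(Finset.Icc (m - 1) (m + 2)) : Set ℕ).ncard :=
        Set.ncard_le_ncard himg (Finset.finite_toSet _)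
    _ = (Finset.Icc (m - 1) (m + 2)).card := Set.ncard_coe_finset _
    _ ≤ 4 := by rw [Nat.card_Icc]; omega
end

section
/- There exists an absolute constant c > 0 such that for every finite simple undirected unweighted graph G = (V, E) on n vertices there exists a spanning subgraph H of G with at most c · n^{3/2} edges such that for every pair of vertices u, v ∈ V in the same connected component of G, the distance in H satisfies δ_H(u, v) ≤ δ_G(u, v) + 2. -/
open SimpleGraph

lemma exists_parent {V : Type} (G : SimpleGraph V) {x u : V} (h : G.Reachable x u) (hne : u ≠ x) :
    ∃ p, G.Adj p u ∧ G.dist x p + 1 = G.dist x u := by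
  obtain ⟨w, hw⟩ := h.exists_walk_length_eq_dist
  obtain ⟨r, hrl⟩ : ∃ (r : G.Walk u x), r.length = G.dist x u :=
    ⟨w.reverse, by simp [hw]⟩
  cases r with
  | nil => exact absurd rfl hne
  | @cons _ b _ hadj q =>
    refine ⟨b, hadj.symm, ?_⟩
    have h1 : G.dist x b ≤ q.length := by
      simpa using dist_le q.reverse
    have h2 : q.length + 1 = G.dist x u := by simpa using hrl
    have h3 : G.dist x u ≤ G.dist x b + 1 := by
      have hreach : G.Reachable x b := ⟨q.reverse⟩
      obtain ⟨t, ht⟩ := hreach.exists_walk_length_eq_dist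
      have := dist_le (t.concat hadj.symm)
      simpa [Walk.length_concat, ht] using this
    omega


lemma spanner_arith (n s fc E : ℕ) (hs : s = Nat.sqrt n + 1) (hK : fc * s ≤ n)
    (hE : E ≤ n * (s - 1) + fc * n) :
    (E : ℝ) ≤ 3 * (n : ℝ) ^ ((3:ℝ)/2) := by
  rcases Nat.eq_zero_or_pos n with h0 | hpos
  · subst h0
    simp at hE
    subst hE
    rw [Nat.cast_zero, Real.zero_rpow (by norm_num)]
    norm_num
  · have hsq0 : (0:ℝ) ≤ (n:ℝ) := by positivity
    have hnat1 : ((Nat.sqrt n : ℕ) : ℝ) ≤ Real.sqrt n := by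
      have h1 : ((Nat.sqrt n)^2 : ℕ) ≤ n := Nat.sqrt_le' n
      have h2 : (((Nat.sqrt n)^2 : ℕ) : ℝ) ≤ (n:ℝ) := by exact_mod_cast h1
      calc ((Nat.sqrt n : ℕ) : ℝ) = Real.sqrt (((Nat.sqrt n : ℕ) : ℝ)^2) := by
            rw [Real.sqrt_sq (by positivity)]
        _ ≤ Real.sqrt n := Real.sqrt_le_sqrt (by push_cast at h2 ⊢; linarith)
    have hnat2 : Real.sqrt n ≤ (s:ℝ) := by
      have h1 : n ≤ s * s := by rw [hs]; exact le_of_lt (Nat.lt_succ_sqrt n)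
      have h2 : (n:ℝ) ≤ ((s:ℝ))^2 := by rw [pow_two]; exact_mod_cast h1
      calc Real.sqrt n ≤ Real.sqrt ((s:ℝ)^2) := Real.sqrt_le_sqrt h2
        _ = (s:ℝ) := Real.sqrt_sq (by positivity)
    have hF : (fc : ℝ) ≤ Real.sqrt n := by
      have hsqpos : (0:ℝ) < Real.sqrt n := Real.sqrt_pos.mpr (by exact_mod_cast hpos)
      have h1 : (fc : ℝ) * Real.sqrt n ≤ Real.sqrt n * Real.sqrt n := by
        calc (fc : ℝ) * Real.sqrt n ≤ (fc : ℝ) * (s:ℝ) :=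
              mul_le_mul_of_nonneg_left hnat2 (by positivity)
          _ ≤ (n:ℝ) := by exact_mod_cast hK
          _ = Real.sqrt n * Real.sqrt n := (Real.mul_self_sqrt hsq0).symm
      exact le_of_mul_le_mul_right h1 hsqpos
    have hrw : ((n : ℝ)) ^ ((3:ℝ)/2) = (n:ℝ) * Real.sqrt n := by
      rw [show (3:ℝ)/2 = 1 + 1/2 by norm_num,
        Real.rpow_add (by exact_mod_cast hpos), Real.rpow_one,
        ← Real.sqrt_eq_rpow]
    rw [hrw]
    have hcast : (E : ℝ) ≤ (n:ℝ) * ((Nat.sqrt n : ℕ):ℝ) + (fc : ℝ) * (n:ℝ) := by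
      have heq : ((n * (s - 1) + fc * n : ℕ) : ℝ) =
          (n:ℝ) * ((Nat.sqrt n : ℕ):ℝ) + (fc : ℝ) * (n:ℝ) := by
        have hs1 : s - 1 = Nat.sqrt n := by omega
        rw [hs1]; push_cast; ring
      rw [← heq]
      exact_mod_cast hE
    nlinarith [Real.sqrt_nonneg (n:ℝ), hsq0]

set_option maxHeartbeats 1000000 in
/-- **(1,2) all-pairs spanner** (the `S = V` instance of the subsetwise spanner
theorem). There is an absolute constant `c > 0` such that every finite simple
graph `G` on `n` vertices has a spanning subgraph `H ≤ G` with at most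
`c · n^{3/2}` edges satisfying `δ_H(u,v) ≤ δ_G(u,v) + 2` for all `u, v` in the
same connected component of `G`. -/
theorem additive_two_spanner :
    ∃ c : ℝ, 0 < c ∧
      ∀ (V : Type) [Fintype V] (G : SimpleGraph V),
        ∃ H : SimpleGraph V, H ≤ G ∧
          (H.edgeSet.ncard : ℝ) ≤ c * (Fintype.card V : ℝ) ^ ((3 : ℝ) / 2) ∧
          ∀ u v : V, G.Reachable u v →
            H.Reachable u v ∧ H.dist u v ≤ G.dist u v + 2 := by
  classical
  refine ⟨3, by norm_num, ?_⟩
  intro V _ G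
  classical
  set n := Fintype.card V with hn
  set s := Nat.sqrt n + 1 with hs
  -- valid families of disjoint neighbor-subsets of size s
  set valid : Finset (V × Finset V) → Prop := fun F =>
    (∀ p ∈ F, (∀ b ∈ p.2, G.Adj p.1 b) ∧ p.2.card = s) ∧
    (∀ p ∈ F, ∀ q ∈ F, p ≠ q → Disjoint p.2 q.2) with hvalid
  obtain ⟨F, hFv, hFmax⟩ : ∃ F, valid F ∧ ∀ F', valid F' →
      (F'.biUnion Prod.snd).card ≤ (F.biUnion Prod.snd).card := by
    obtain ⟨F, hF1, hF2⟩ := Finset.exists_max_image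
      ((Finset.univ : Finset (Finset (V × Finset V))).filter valid)
      (fun F => (F.biUnion Prod.snd).card)
      ⟨∅, by simp [hvalid]⟩
    exact ⟨F, (Finset.mem_filter.mp hF1).2, fun F' h' =>
      hF2 F' (Finset.mem_filter.mpr ⟨Finset.mem_univ _, h'⟩)⟩
  set K := F.biUnion Prod.snd with hK
  set C := F.image Prod.fst with hC
  -- maximality: every vertex has < s neighbors outside K
  have hout : ∀ a : V, (Finset.univ.filter fun b => G.Adj a b ∧ b ∉ K).card ≤ s - 1 := by
    intro a
    by_contra hcon
    have hsle : s ≤ (Finset.univ.filter fun b => G.Adj a b ∧ b ∉ K).card := by omega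
    obtain ⟨N, hNsub, hNcard⟩ := Finset.exists_subset_card_eq hsle
    have hNout : ∀ b ∈ N, G.Adj a b ∧ b ∉ K := fun b hb => (Finset.mem_filter.mp (hNsub hb)).2
    have hvalid' : valid (insert (a, N) F) := by
      constructor
      · intro p hp
        rcases Finset.mem_insert.mp hp with rfl | hp
        · exact ⟨fun b hb => (hNout b hb).1, hNcard⟩
        · exact hFv.1 p hp
      · intro p hp q hq hne
        rcases Finset.mem_insert.mp hp with rfl | hp <;>
          rcases Finset.mem_insert.mp hq with rfl | hq
        · exact absurd rfl hne
        · exact Finset.disjoint_left.mpr fun b hb hbq =>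
            (hNout b hb).2 (Finset.mem_biUnion.mpr ⟨q, hq, hbq⟩)
        · exact Finset.disjoint_right.mpr fun b hbq hb =>
            (hNout b hbq).2 (Finset.mem_biUnion.mpr ⟨p, hp, hb⟩)
        · exact hFv.2 p hp q hq hne
    have hle := hFmax _ hvalid'
    rw [Finset.biUnion_insert] at hle
    have hdisj : Disjoint N K := Finset.disjoint_left.mpr fun b hb => (hNout b hb).2
    rw [Finset.card_union_of_disjoint hdisj] at hle
    omega
  -- sizes
  have hKcard : F.card * s ≤ n := by
    have h1 : K.card = ∑ p ∈ F, p.2.card := Finset.card_biUnion hFv.2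
    have h2 : ∑ p ∈ F, p.2.card = F.card * s :=
      (Finset.sum_congr rfl fun p hp => (hFv.1 p hp).2).trans (by
        rw [Finset.sum_const, smul_eq_mul])
    have h3 : K.card ≤ n := Finset.card_le_univ K
    omega
  -- parent function
  have hparex : ∀ x u : V, ∃ p, (G.Reachable x u → u ≠ x → G.Adj p u ∧ G.dist x p + 1 = G.dist x u) := by
    intro x u
    by_cases h : G.Reachable x u ∧ u ≠ x
    · obtain ⟨p, hp⟩ := exists_parent G h.1 h.2; exact ⟨p, fun _ _ => hp⟩
    · exact ⟨x, fun h1 h2 => absurd ⟨h1, h2⟩ h⟩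
  choose par hpar using hparex
  -- the spanner
  set H : SimpleGraph V := {
    Adj := fun a b => G.Adj a b ∧ (a ∉ K ∨ b ∉ K ∨
      (∃ x ∈ C, (G.Reachable x b ∧ b ≠ x ∧ a = par x b) ∨ (G.Reachable x a ∧ a ≠ x ∧ b = par x a)))
    symm := by
      constructor
      rintro a b ⟨hadj, h⟩
      refine ⟨hadj.symm, ?_⟩
      rcases h with h | h | ⟨x, hx, h⟩
      · exact Or.inr (Or.inl h)
      · exact Or.inl h
      · exact Or.inr (Or.inr ⟨x, hx, h.symm⟩)
    loopless := ⟨fun a h => G.loopless.irrefl a h.1⟩ } with hH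
  have hHG : H ≤ G := fun a b h => h.1
  -- BFS walks in H from centers
  have hBFS : ∀ x ∈ C, ∀ (d : ℕ) (w : V), G.Reachable x w → G.dist x w ≤ d →
      ∃ q : H.Walk x w, q.length ≤ G.dist x w := by
    intro x hx d
    induction d with
    | zero =>
      intro w hr hd
      have hwx : x = w := by
        by_contra hne
        have := hr.pos_dist_of_ne hne
        omega
      subst hwx
      exact ⟨Walk.nil, by simp⟩
    | succ d ih =>
      intro w hr hd
      by_cases hwx : w = x
      · subst hwx; exact ⟨Walk.nil, by simp⟩
      · obtain ⟨hadj, hdist⟩ := hpar x w hr hwx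
        have hrp : G.Reachable x (par x w) := hr.trans hadj.reachable.symm
        have hdp : G.dist x (par x w) ≤ d := by omega
        obtain ⟨q, hq⟩ := ih (par x w) hrp hdp
        have hHadj : H.Adj (par x w) w := ⟨hadj, Or.inr (Or.inr ⟨x, hx, Or.inl ⟨hr, hwx, rfl⟩⟩)⟩
        exact ⟨q.concat hHadj, by rw [Walk.length_concat]; omega⟩
  refine ⟨H, hHG, ?_, ?_⟩
  · -- edge count
    set A : Finset (Sym2 V) := Finset.univ.biUnion (fun a : V =>
      (Finset.univ.filter fun b => G.Adj a b ∧ b ∉ K).image (fun b => s(a, b))) with hA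
    set B : Finset (Sym2 V) := (C ×ˢ Finset.univ).image
      (fun q : V × V => s(par q.1 q.2, q.2)) with hB
    have hsub : H.edgeSet ⊆ ↑(A ∪ B) := by
      intro e he
      induction e using Sym2.ind with
      | _ a b =>
        rw [mem_edgeSet] at he
        obtain ⟨hadj, hor⟩ := he
        rw [Finset.coe_union, Set.mem_union]
        rcases hor with h | h | ⟨x, hx, ⟨_, _, rfl⟩ | ⟨_, _, rfl⟩⟩
        · exact Or.inl (Finset.mem_coe.mpr (Finset.mem_biUnion.mpr ⟨b, Finset.mem_univ _,
            Finset.mem_image.mpr ⟨a, Finset.mem_filter.mpr ⟨Finset.mem_univ _, hadj.symm, h⟩,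
              Sym2.eq_swap⟩⟩))
        · exact Or.inl (Finset.mem_coe.mpr (Finset.mem_biUnion.mpr ⟨a, Finset.mem_univ _,
            Finset.mem_image.mpr ⟨b, Finset.mem_filter.mpr ⟨Finset.mem_univ _, hadj, h⟩, rfl⟩⟩))
        · exact Or.inr (Finset.mem_coe.mpr (Finset.mem_image.mpr ⟨(x, b),
            Finset.mem_product.mpr ⟨hx, Finset.mem_univ _⟩, rfl⟩))
        · exact Or.inr (Finset.mem_coe.mpr (Finset.mem_image.mpr ⟨(x, a),
            Finset.mem_product.mpr ⟨hx, Finset.mem_univ _⟩, Sym2.eq_swap⟩))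
    have hAcard : A.card ≤ n * (s - 1) := by
      calc A.card ≤ ∑ a : V, ((Finset.univ.filter fun b => G.Adj a b ∧ b ∉ K).image
            (fun b => s(a, b))).card := Finset.card_biUnion_le
        _ ≤ ∑ _a : V, (s - 1) := Finset.sum_le_sum fun a _ =>
            le_trans Finset.card_image_le (hout a)
        _ = n * (s - 1) := by
            rw [Finset.sum_const, smul_eq_mul, Finset.card_univ]
    have hBcard : B.card ≤ F.card * n := by
      calc B.card ≤ (C ×ˢ (Finset.univ : Finset V)).card := Finset.card_image_le
        _ = C.card * n := by rw [Finset.card_product, Finset.card_univ]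
        _ ≤ F.card * n := Nat.mul_le_mul_right _ Finset.card_image_le
    have hncard : H.edgeSet.ncard ≤ n * (s - 1) + F.card * n := by
      have h1 := Set.ncard_le_ncard hsub (Finset.finite_toSet _)
      rw [Set.ncard_coe_finset] at h1
      exact le_trans h1 (le_trans (Finset.card_union_le _ _) (Nat.add_le_add hAcard hBcard))
    exact spanner_arith n s F.card H.edgeSet.ncard hs hKcard hncard
  · -- spanner property
    intro u v hruv
    obtain ⟨p, hp⟩ := hruv.exists_walk_length_eq_dist
    by_cases hcase : ∀ dt ∈ p.darts, dt.toProd.1 ∉ K ∨ dt.toProd.2 ∉ K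
    · have hedges : ∀ e ∈ p.edges, e ∈ H.edgeSet := by
        intro e he
        rw [Walk.edges, List.mem_map] at he
        obtain ⟨dt, hdt, rfl⟩ := he
        have hHadj : H.Adj dt.toProd.1 dt.toProd.2 := ⟨dt.adj, by
          rcases hcase dt hdt with h | h
          exacts [Or.inl h, Or.inr (Or.inl h)]⟩
        exact hHadj
      refine ⟨⟨p.transfer H hedges⟩, ?_⟩
      calc H.dist u v ≤ (p.transfer H hedges).length := dist_le _
        _ = p.length := Walk.length_transfer _ _
        _ = G.dist u v := hp
        _ ≤ G.dist u v + 2 := by omega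
    · push_neg at hcase
      obtain ⟨dt, hdt, haK, hbK⟩ := hcase
      have hasup : dt.toProd.1 ∈ p.support := p.dart_fst_mem_support_of_mem_darts hdt
      obtain ⟨pr, hprF, haN⟩ := Finset.mem_biUnion.mp haK
      have hxC : pr.1 ∈ C := Finset.mem_image.mpr ⟨pr, hprF, rfl⟩
      have hxa : G.Adj pr.1 dt.toProd.1 := (hFv.1 pr hprF).1 _ haN
      have hlen : (p.takeUntil _ hasup).length + (p.dropUntil _ hasup).length = G.dist u v := by
        have h1 := congrArg Walk.length (p.take_spec hasup)
        rw [Walk.length_append] at h1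
        omega
      have hrxu : G.Reachable pr.1 u := hxa.reachable.trans ⟨(p.takeUntil _ hasup).reverse⟩
      have hrxv : G.Reachable pr.1 v := hxa.reachable.trans ⟨p.dropUntil _ hasup⟩
      have hdxu : G.dist pr.1 u ≤ (p.takeUntil _ hasup).length + 1 := by
        have := dist_le (hxa.toWalk.append (p.takeUntil _ hasup).reverse)
        simpa [Walk.length_append] using this
      have hdxv : G.dist pr.1 v ≤ (p.dropUntil _ hasup).length + 1 := by
        have := dist_le (hxa.toWalk.append (p.dropUntil _ hasup))
        simpa [Walk.length_append] using this
      obtain ⟨q1, hq1⟩ := hBFS pr.1 hxC (G.dist pr.1 u) u hrxu le_rfl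
      obtain ⟨q2, hq2⟩ := hBFS pr.1 hxC (G.dist pr.1 v) v hrxv le_rfl
      refine ⟨⟨q1.reverse.append q2⟩, ?_⟩
      calc H.dist u v ≤ (q1.reverse.append q2).length := dist_le _
        _ = q1.length + q2.length := by rw [Walk.length_append, Walk.length_reverse]
        _ ≤ G.dist u v + 2 := by omega
end
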